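/- arXiv:1601.04133 — 9 statements merged into one kernel-verified Lean document; each statement's English description precedes it below -/
import Mathlib

section
/- Let A ∈ UU_n(F_q) have all super-diagonal entries non-zero. Then the centralizer of A in UU_n(F_q) has cardinality q^{n−1}. In particular, if B ∈ UU_n(F_q) commutes with A, the first-row entries b_{12},...,b_{1n} of B determine all remaining entries of B. -/
def IsUU {n : ℕ} {K : Type*} [Field K] (A : Matrix (Fin n) (Fin n) K) : Prop :=
  (∀ i, A i i = 1) ∧ ∀ i j : Fin n, j < i → A i j = 0

namespace Stmt7Aux

variable {n : ℕ} {F : Type*} [Field F]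

lemma mul_apply_collapse (M P : Matrix (Fin n) (Fin n) F) (i j k0 : Fin n)
    (h : ∀ k : Fin n, k ≠ k0 → M i k * P k j = 0) :
    (M * P) i j = M i k0 * P k0 j := by
  rw [Matrix.mul_apply]
  exact Finset.sum_eq_single k0 (fun k _ hk => h k hk)
    (fun hk => absurd (Finset.mem_univ k0) hk)

lemma pow_lower (N : Matrix (Fin n) (Fin n) F)
    (hN1 : ∀ i j : Fin n, (j : ℕ) ≤ i → N i j = 0) :
    ∀ m : ℕ, ∀ i j : Fin n, (j : ℕ) < (i : ℕ) + m → (N ^ m) i j = 0 := by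
  intro m
  induction m with
  | zero =>
    intro i j hj
    have : j ≠ i := fun h => by simp [h] at hj
    rw [pow_zero]; exact Matrix.one_apply_ne' this
  | succ m IH =>
    intro i j hj
    rw [pow_succ, Matrix.mul_apply]
    apply Finset.sum_eq_zero
    intro k _
    by_cases hk : (j : ℕ) ≤ k
    · rw [hN1 k j hk, mul_zero]
    · rw [IH i k (by omega), zero_mul]

lemma pow_diag (N : Matrix (Fin n) (Fin n) F)
    (hN1 : ∀ i j : Fin n, (j : ℕ) ≤ i → N i j = 0)
    (hNs : ∀ i j : Fin n, (j : ℕ) = (i : ℕ) + 1 → N i j ≠ 0) :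
    ∀ m : ℕ, ∀ i j : Fin n, (j : ℕ) = (i : ℕ) + m → (N ^ m) i j ≠ 0 := by
  intro m
  induction m with
  | zero =>
    intro i j hj
    have : j = i := Fin.ext (by omega)
    rw [pow_zero, this]; simp
  | succ m IH =>
    intro i j hj
    have hk0 : (i : ℕ) + m < n := by have := j.isLt; omega
    set k0 : Fin n := ⟨(i : ℕ) + m, hk0⟩ with hk0def
    rw [pow_succ, mul_apply_collapse _ _ _ _ k0 ?_]
    · exact mul_ne_zero (IH i k0 rfl) (hNs k0 j (by simp [hk0def]; omega))
    · intro k hk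
      by_cases hlt : (k : ℕ) < (i : ℕ) + m
      · rw [pow_lower N hN1 m i k hlt, zero_mul]
      · have : (k : ℕ) ≠ (i : ℕ) + m := fun h => hk (Fin.ext (by simp [hk0def, h]))
        rw [hN1 k j (by omega), mul_zero]


lemma centralizer_eq_zero (N D : Matrix (Fin n) (Fin n) F)
    (hN1 : ∀ i j : Fin n, (j : ℕ) ≤ i → N i j = 0)
    (hNs : ∀ i j : Fin n, (j : ℕ) = (i : ℕ) + 1 → N i j ≠ 0)
    (hcomm : D * N = N * D)
    (hDu : ∀ i j : Fin n, (j : ℕ) ≤ i → D i j = 0)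
    (hrow : ∀ i j : Fin n, (i : ℕ) = 0 → D i j = 0) : D = 0 := by
  have key : ∀ d : ℕ, ∀ i j : Fin n, (j : ℕ) < (i : ℕ) + d + 1 → D i j = 0 := by
    intro d
    induction d with
    | zero => intro i j h; exact hDu i j (by omega)
    | succ d IH =>
      have inner : ∀ m : ℕ, ∀ i j : Fin n, (i : ℕ) = m →
          (j : ℕ) = (i : ℕ) + d + 1 → D i j = 0 := by
        intro m
        induction m with
        | zero => intro i j hi _; exact hrow i j hi
        | succ m IHm =>
          intro i j hi hj
          have hjn : (j : ℕ) < n := j.isLt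
          have hm0 : m < n := by omega
          have hmd : m + d + 1 < n := by omega
          set i0 : Fin n := ⟨m, hm0⟩ with hi0
          set k0 : Fin n := ⟨m + d + 1, hmd⟩ with hk0
          have L : (D * N) i0 j = D i0 k0 * N k0 j := by
            apply mul_apply_collapse
            intro k hk
            by_cases hlt : (k : ℕ) < m + d + 1
            · rw [IH i0 k (by simp [hi0]; omega), zero_mul]
            · have hne : (k : ℕ) ≠ m + d + 1 := fun h => hk (Fin.ext (by simp [hk0, h]))
              rw [hN1 k j (by omega), mul_zero]
          have R : (N * D) i0 j = N i0 i * D i j := by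
            apply mul_apply_collapse
            intro k hk
            by_cases hle : (k : ℕ) ≤ m
            · rw [hN1 i0 k (by simp [hi0]; omega), zero_mul]
            · have hne : (k : ℕ) ≠ m + 1 := fun h => hk (Fin.ext (by omega))
              rw [IH k j (by omega), mul_zero]
          have hD0 : D i0 k0 = 0 := IHm i0 k0 rfl (by simp [hi0, hk0])
          have hNne : N i0 i ≠ 0 := hNs i0 i (by simp [hi0]; omega)
          have heq : D i0 k0 * N k0 j = N i0 i * D i j := by
            rw [← L, ← R, hcomm]
          rw [hD0, zero_mul] at heq
          exact (mul_eq_zero.mp heq.symm).resolve_left hNne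
      intro i j h
      by_cases hlt : (j : ℕ) < (i : ℕ) + d + 1
      · exact IH i j hlt
      · exact inner i i j rfl (by omega)
  ext i j
  have := key n i j (by have := j.isLt; omega)
  simpa using this


def IsUU' {n : ℕ} {K : Type*} [Field K] (A : Matrix (Fin n) (Fin n) K) : Prop :=
  (∀ i, A i i = 1) ∧ ∀ i j : Fin n, j < i → A i j = 0

lemma N_lower {A : Matrix (Fin n) (Fin n) F} (hA : IsUU' A) :
    ∀ i j : Fin n, (j : ℕ) ≤ i → (A - 1) i j = 0 := by
  intro i j hj
  rcases eq_or_lt_of_le hj with h | h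
  · have : j = i := Fin.ext h
    simp [this, Matrix.sub_apply, hA.1 i]
  · have hij : i ≠ j := fun he => absurd h (by simp [he])
    simp [Matrix.sub_apply, hA.2 i j h, Matrix.one_apply_ne hij]

lemma N_super {A : Matrix (Fin n) (Fin n) F} (hA : IsUU' A)
    (hsd : ∀ i : Fin n, ∀ h : (i : ℕ) + 1 < n, A i ⟨(i : ℕ) + 1, h⟩ ≠ 0) :
    ∀ i j : Fin n, (j : ℕ) = (i : ℕ) + 1 → (A - 1) i j ≠ 0 := by
  intro i j hj
  have h1 : (i : ℕ) + 1 < n := by have := j.isLt; omega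
  have hji : j = ⟨(i : ℕ) + 1, h1⟩ := Fin.ext hj
  have hne : i ≠ j := fun h => by rw [← h] at hj; omega
  rw [Matrix.sub_apply, Matrix.one_apply_ne hne, sub_zero, hji]
  exact hsd i h1

lemma comm_N {A B : Matrix (Fin n) (Fin n) F} (h : B * A = A * B) :
    B * (A - 1) = (A - 1) * B := by
  rw [Matrix.mul_sub, Matrix.sub_mul, mul_one, one_mul, h]

lemma uniq (hn : 0 < n) {A : Matrix (Fin n) (Fin n) F} (hA : IsUU' A)
    (hsd : ∀ i : Fin n, ∀ h : (i : ℕ) + 1 < n, A i ⟨(i : ℕ) + 1, h⟩ ≠ 0)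
    (B C : Matrix (Fin n) (Fin n) F) (hB : IsUU' B) (hC : IsUU' C)
    (hBc : B * A = A * B) (hCc : C * A = A * C)
    (hrow : ∀ j : Fin n, B ⟨0, hn⟩ j = C ⟨0, hn⟩ j) : B = C := by
  have hD : B - C = 0 := by
    apply centralizer_eq_zero (A - 1) (B - C) (N_lower hA) (N_super hA hsd)
    · rw [Matrix.sub_mul, comm_N hBc, comm_N hCc, Matrix.mul_sub]
    · intro i j hj
      rcases eq_or_lt_of_le hj with h | h
      · have : j = i := Fin.ext h
        simp [this, Matrix.sub_apply, hB.1 i, hC.1 i]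
      · simp [Matrix.sub_apply, hB.2 i j h, hC.2 i j h]
    · intro i j hi
      have : i = ⟨0, hn⟩ := Fin.ext hi
      simp [this, Matrix.sub_apply, hrow j]
  have := sub_eq_zero.mp hD
  exact this


variable [Fintype F]

def gmat (N : Matrix (Fin n) (Fin n) F) (t : Fin (n - 1) → F) :
    Matrix (Fin n) (Fin n) F :=
  1 + ∑ k : Fin (n - 1), t k • N ^ ((k : ℕ) + 1)

lemma gmat_apply (N : Matrix (Fin n) (Fin n) F) (t : Fin (n - 1) → F) (i j : Fin n) :
    gmat N t i j = (1 : Matrix (Fin n) (Fin n) F) i j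
      + ∑ k : Fin (n - 1), t k * (N ^ ((k : ℕ) + 1)) i j := by
  simp [gmat, Matrix.add_apply, Matrix.sum_apply, Matrix.smul_apply, smul_eq_mul]

lemma gmat_isUU {A : Matrix (Fin n) (Fin n) F} (hA : IsUU' A) (t : Fin (n - 1) → F) :
    IsUU' (gmat (A - 1) t) := by
  constructor
  · intro i
    rw [gmat_apply, Matrix.one_apply_eq]
    rw [Finset.sum_eq_zero, add_zero]
    intro k _
    rw [pow_lower (A - 1) (N_lower hA) _ i i (by omega), mul_zero]
  · intro i j hj
    rw [gmat_apply, Matrix.one_apply_ne (Fin.ne_of_lt hj).symm]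
    rw [Finset.sum_eq_zero, add_zero]
    intro k _
    rw [pow_lower (A - 1) (N_lower hA) _ i j (by have : (j:ℕ) < i := hj; omega), mul_zero]

lemma gmat_comm (A : Matrix (Fin n) (Fin n) F) (t : Fin (n - 1) → F) :
    gmat (A - 1) t * A = A * gmat (A - 1) t := by
  have hAN : Commute A (A - 1) := (Commute.refl A).sub_right (Commute.one_right A)
  have hc : Commute A (gmat (A - 1) t) := by
    unfold gmat
    exact (Commute.one_right A).add_right
      (Commute.sum_right _ _ _ fun k _ => (hAN.pow_right _).smul_right _)
  exact hc.eq.symm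

lemma gmat_inj (hn : 0 < n) {A : Matrix (Fin n) (Fin n) F} (hA : IsUU' A)
    (hsd : ∀ i : Fin n, ∀ h : (i : ℕ) + 1 < n, A i ⟨(i : ℕ) + 1, h⟩ ≠ 0) :
    Function.Injective (gmat (A - 1) (n := n)) := by
  set N := A - 1 with hN
  intro t s h
  have key : ∀ K : ℕ, ∀ k : Fin (n - 1), (k : ℕ) = K → t k = s k := by
    intro K
    induction K using Nat.strong_induction_on with
    | _ K IH =>
      intro k hk
      have hk1 : (k : ℕ) + 1 < n := by have := k.isLt; omega
      set j : Fin n := ⟨(k : ℕ) + 1, hk1⟩ with hj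
      set z : Fin n := ⟨0, hn⟩ with hz
      have he := congrFun (congrFun h z) j
      rw [gmat_apply, gmat_apply] at he
      have he2 : ∑ m : Fin (n - 1), (t m - s m) * (N ^ ((m : ℕ) + 1)) z j = 0 := by
        rw [Finset.sum_congr rfl (fun m _ => sub_mul (t m) (s m) _),
          Finset.sum_sub_distrib]
        rw [add_left_cancel he]
        exact sub_self _
      rw [Finset.sum_eq_single k] at he2
      · have hpow : (N ^ ((k : ℕ) + 1)) z j ≠ 0 :=
          pow_diag N (N_lower hA) (N_super hA hsd) _ z j (by simp [hj, hz])
        have := (mul_eq_zero.mp he2).resolve_right hpow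
        exact sub_eq_zero.mp this
      · intro m _ hm
        by_cases hlt : (m : ℕ) < K
        · rw [sub_eq_zero.mpr (IH m hlt m rfl), zero_mul]
        · have : (j : ℕ) < (z : ℕ) + ((m : ℕ) + 1) := by
            simp [hj, hz]
            have : (m : ℕ) ≠ K := fun hh => hm (Fin.ext (by omega))
            omega
          rw [pow_lower N (N_lower hA) _ z j this, mul_zero]
      · intro hk'; exact absurd (Finset.mem_univ k) hk'
  funext k
  exact key (k : ℕ) k rfl


lemma frow_inj (hn : 0 < n) {A : Matrix (Fin n) (Fin n) F} (hA : IsUU' A)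
    (hsd : ∀ i : Fin n, ∀ h : (i : ℕ) + 1 < n, A i ⟨(i : ℕ) + 1, h⟩ ≠ 0)
    (B C : Matrix (Fin n) (Fin n) F) (hB : IsUU' B) (hC : IsUU' C)
    (hBc : B * A = A * B) (hCc : C * A = A * C)
    (hr : ∀ k : Fin (n - 1),
      B ⟨0, hn⟩ ⟨(k : ℕ) + 1, by have := k.isLt; omega⟩ =
      C ⟨0, hn⟩ ⟨(k : ℕ) + 1, by have := k.isLt; omega⟩) : B = C := by
  apply uniq hn hA hsd B C hB hC hBc hCc
  intro j
  by_cases hj0 : (j : ℕ) = 0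
  · have : j = ⟨0, hn⟩ := Fin.ext hj0
    rw [this]
    rw [show B ⟨0, hn⟩ ⟨0, hn⟩ = 1 from hB.1 _, show C ⟨0, hn⟩ ⟨0, hn⟩ = 1 from hC.1 _]
  · have hm : (j : ℕ) - 1 < n - 1 := by have := j.isLt; omega
    have hjj : j = ⟨((⟨(j : ℕ) - 1, hm⟩ : Fin (n - 1)) : ℕ) + 1, by simp; omega⟩ :=
      Fin.ext (by simp; omega)
    rw [hjj]
    exact hr ⟨(j : ℕ) - 1, hm⟩

lemma count (hn : 0 < n) {A : Matrix (Fin n) (Fin n) F} (hA : IsUU' A)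
    (hsd : ∀ i : Fin n, ∀ h : (i : ℕ) + 1 < n, A i ⟨(i : ℕ) + 1, h⟩ ≠ 0) :
    {B : Matrix (Fin n) (Fin n) F | IsUU' B ∧ B * A = A * B}.ncard =
      Fintype.card F ^ (n - 1) := by
  set N := A - 1 with hN
  set f : Matrix (Fin n) (Fin n) F → (Fin (n - 1) → F) :=
    fun M k => M ⟨0, hn⟩ ⟨(k : ℕ) + 1, by have := k.isLt; omega⟩ with hf
  have hmem : ∀ t, IsUU' (gmat N t) ∧ gmat N t * A = A * gmat N t :=
    fun t => ⟨gmat_isUU hA t, gmat_comm A t⟩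
  have hφinj : Function.Injective (f ∘ gmat N) := by
    intro t s h
    apply gmat_inj hn hA hsd
    exact frow_inj hn hA hsd _ _ (hmem t).1 (hmem s).1 (hmem t).2 (hmem s).2
      (fun k => congrFun h k)
  have hφsurj : Function.Surjective (f ∘ gmat N) :=
    Finite.surjective_of_injective hφinj
  have hrange : {B : Matrix (Fin n) (Fin n) F | IsUU' B ∧ B * A = A * B} =
      Set.range (gmat N) := by
    ext B
    constructor
    · rintro ⟨hB, hBc⟩
      obtain ⟨t, ht⟩ := hφsurj (f B)
      refine ⟨t, ?_⟩
      exact frow_inj hn hA hsd _ _ (hmem t).1 hB (hmem t).2 hBc (fun k => congrFun ht k)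
    · rintro ⟨t, rfl⟩
      exact hmem t
  rw [hrange, ← Nat.card_coe_set_eq, Nat.card_range_of_injective (gmat_inj hn hA hsd),
    Nat.card_eq_fintype_card, Fintype.card_fun, Fintype.card_fin]

end Stmt7Aux

theorem stmt7 {n : ℕ} (hn : 0 < n) {F : Type*} [Field F] [Fintype F]
    (A : Matrix (Fin n) (Fin n) F) (hA : IsUU A)
    (hsd : ∀ i : Fin n, ∀ h : (i : ℕ) + 1 < n, A i ⟨(i : ℕ) + 1, h⟩ ≠ 0) :
    {B : Matrix (Fin n) (Fin n) F | IsUU B ∧ B * A = A * B}.ncard =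
      Fintype.card F ^ (n - 1) ∧
    ∀ B C : Matrix (Fin n) (Fin n) F, IsUU B → IsUU C →
      B * A = A * B → C * A = A * C →
      (∀ j : Fin n, B ⟨0, hn⟩ j = C ⟨0, hn⟩ j) → B = C := by
  have hA' : Stmt7Aux.IsUU' A := hA
  constructor
  · have := Stmt7Aux.count hn hA' hsd
    convert this using 2
    rfl
  · intro B C hB hC hBc hCc hr
    exact Stmt7Aux.uniq hn hA' hsd B C hB hC hBc hCc hr
end

section
/- Let S_0 = {A ∈ UU_n(F_q) : all super-diagonal entries of A are non-zero}. Then the maximum size of a pairwise non-commuting subset of S_0 is (q−1)^{n−2} · q^{C(n−2,2)}, where C(n−2,2) is the binomial coefficient (n−2 choose 2). -/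
/-- `omegaM X` is the maximum cardinality of a pairwise non-commuting subset of `X`
(inside a monoid). -/
noncomputable def omegaM {M : Type*} [Monoid M] (X : Set M) : ℕ :=
  sSup {k : ℕ | ∃ N : Finset M, ↑N ⊆ X ∧
    (∀ x ∈ N, ∀ y ∈ N, x ≠ y → x * y ≠ y * x) ∧ N.card = k}

namespace Stmt8

open Matrix Finset

variable {F : Type*} [Field F]

/-- the set of unipotent upper triangular matrices with nonzero superdiagonal -/
def Spred {n : ℕ} (A : Matrix (Fin n) (Fin n) F) : Prop :=
  IsUU A ∧ ∀ i : Fin n, ∀ h : (i : ℕ) + 1 < n, A i ⟨(i : ℕ) + 1, h⟩ ≠ 0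

/-- strictly upper triangular with nonzero superdiagonal -/
def SU {n : ℕ} (N : Matrix (Fin n) (Fin n) F) : Prop :=
  (∀ i j : Fin n, (j:ℕ) ≤ (i:ℕ) → N i j = 0) ∧
  (∀ i j : Fin n, (j:ℕ) = (i:ℕ) + 1 → N i j ≠ 0)

lemma pow_entry_eq_zero {n : ℕ} {N : Matrix (Fin n) (Fin n) F}
    (h0 : ∀ i j : Fin n, (j:ℕ) ≤ (i:ℕ) → N i j = 0) :
    ∀ (k : ℕ) (i j : Fin n), (j:ℕ) < (i:ℕ) + k → (N ^ k) i j = 0 := by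
  intro k
  induction k with
  | zero =>
    intro i j hj
    rw [pow_zero, Matrix.one_apply_ne]
    intro e; rw [e] at hj; omega
  | succ k ih =>
    intro i j hj
    rw [pow_succ', Matrix.mul_apply]
    apply Finset.sum_eq_zero
    intro l _
    by_cases hl : (l:ℕ) ≤ (i:ℕ)
    · rw [h0 i l hl, zero_mul]
    · rw [ih l j (by omega), mul_zero]

lemma pow_entry_ne_zero {n : ℕ} {N : Matrix (Fin n) (Fin n) F} (hN : SU N) :
    ∀ (k : ℕ) (i j : Fin n), (j:ℕ) = (i:ℕ) + k → (N ^ k) i j ≠ 0 := by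
  intro k
  induction k with
  | zero =>
    intro i j hj
    have : i = j := Fin.ext (by omega)
    rw [this, pow_zero, Matrix.one_apply_eq]
    exact one_ne_zero
  | succ k ih =>
    intro i j hj
    have hjlt : (j:ℕ) < n := j.isLt
    have hi1 : (i:ℕ) + 1 < n := by omega
    set i' : Fin n := ⟨(i:ℕ)+1, hi1⟩ with hi'
    rw [pow_succ', Matrix.mul_apply, Finset.sum_eq_single i']
    · exact mul_ne_zero (hN.2 i i' rfl) (ih i' j (by simp [hi']; omega))
    · intro l _ hl
      by_cases h1 : (l:ℕ) ≤ (i:ℕ)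
      · rw [hN.1 i l h1, zero_mul]
      · have hne : (l:ℕ) ≠ (i:ℕ)+1 := fun e => hl (Fin.ext e)
        rw [pow_entry_eq_zero hN.1 k l j (by omega), mul_zero]
    · intro h; exact absurd (Finset.mem_univ i') h

/-- every matrix commuting with a "regular" strictly upper triangular `N`
is a polynomial in `N` -/
lemma exists_poly {n : ℕ} (hn : 0 < n) {N B : Matrix (Fin n) (Fin n) F} (hSU : SU N)
    (hB : B * N = N * B) : ∃ c : Fin n → F, B = ∑ k : Fin n, c k • N ^ (k:ℕ) := by
  classical
  have pz := pow_entry_eq_zero hSU.1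
  have pnz := pow_entry_ne_zero hSU
  set e : Fin n := ⟨n-1, by omega⟩ with he
  set M : Matrix (Fin n) (Fin n) F := Matrix.of fun i k : Fin n => (N ^ (k:ℕ)) i e with hM
  -- M is invertible
  have hdet : IsUnit M.det := by
    have h1 : (M.submatrix id (Fin.revPerm : Equiv.Perm (Fin n))).det = Equiv.Perm.sign Fin.revPerm * M.det :=
      Matrix.det_permute' _ M
    have h2 : (M.submatrix id (Fin.revPerm : Equiv.Perm (Fin n))).det ≠ 0 := by
      rw [Matrix.det_of_upperTriangular]
      · apply Finset.prod_ne_zero_iff.2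
        intro i _
        simp only [Matrix.submatrix_apply, hM, Matrix.of_apply]
        apply pnz
        simp [Fin.rev, he]; omega
      · intro i k hk
        simp only [Matrix.submatrix_apply, hM, Matrix.of_apply, id_eq]
        apply pz
        have hrv : (Fin.revPerm k : Fin n) = k.rev := rfl
        rw [hrv]
        simp only [Fin.rev, he]
        have := i.isLt
        have : (k:ℕ) < n := k.isLt
        simp only [id_eq] at hk
        simp only [Fin.lt_def] at hk
        omega
    refine isUnit_iff_ne_zero.mpr fun h => h2 ?_
    rw [h1, h, mul_zero]
  have hMM : M * M⁻¹ = 1 := Matrix.mul_nonsing_inv M hdet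
  -- commuting with powers
  have hBk : ∀ k : ℕ, B * N ^ k = N ^ k * B := fun k => (Commute.pow_right hB k)
  set c : Fin n → F := M⁻¹ *ᵥ (fun j => B j e) with hc
  set P : Matrix (Fin n) (Fin n) F := ∑ k : Fin n, c k • N ^ (k:ℕ) with hP
  have hPk : ∀ k : ℕ, P * N ^ k = N ^ k * P := by
    intro k
    rw [hP, Finset.sum_mul, Finset.mul_sum]
    apply Finset.sum_congr rfl
    intro l _
    rw [smul_mul_assoc, mul_smul_comm, ← pow_add, ← pow_add, Nat.add_comm]
  have hPcol : ∀ j : Fin n, P j e = B j e := by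
    intro j
    have : P j e = (M *ᵥ c) j := by
      rw [hP, Matrix.sum_apply, Matrix.mulVec, dotProduct]
      apply Finset.sum_congr rfl
      intro k _
      rw [Matrix.smul_apply, smul_eq_mul, mul_comm]
      rfl
    rw [this, hc, Matrix.mulVec_mulVec, hMM, Matrix.one_mulVec]
  have hBM : (B - P) * M = 0 := by
    ext i k
    have h3 : ((B - P) * M) i k = ((B - P) * N ^ (k:ℕ)) i e := by
      rw [Matrix.mul_apply, Matrix.mul_apply]
      rfl
    have h4 : (B - P) * N ^ (k:ℕ) = N ^ (k:ℕ) * (B - P) := by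
      rw [sub_mul, mul_sub, hBk, hPk]
    rw [h3, h4, Matrix.mul_apply]
    apply (Finset.sum_eq_zero _).trans (Matrix.zero_apply i k).symm
    intro j _
    rw [Matrix.sub_apply, hPcol, sub_self, mul_zero]
  have : B - P = 0 := by
    have h5 : (B - P) * M * M⁻¹ = 0 := by rw [hBM, Matrix.zero_mul]
    rwa [Matrix.mul_assoc, hMM, Matrix.mul_one] at h5
  exact ⟨c, by rw [← hP]; linear_combination (norm := abel) this⟩

lemma sub_one_entry {n : ℕ} (A : Matrix (Fin n) (Fin n) F) {i j : Fin n} (h : i ≠ j) :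
    (A - 1) i j = A i j := by
  rw [Matrix.sub_apply, Matrix.one_apply_ne h, sub_zero]

lemma SU_of {n : ℕ} {A : Matrix (Fin n) (Fin n) F} (hA : Spred A) : SU (A - 1) := by
  constructor
  · intro i j hij
    rcases eq_or_lt_of_le hij with h | h
    · have : j = i := Fin.ext h
      subst this
      rw [Matrix.sub_apply, hA.1.1, Matrix.one_apply_eq, sub_self]
    · have hne : i ≠ j := fun e => by rw [e] at h; omega
      rw [sub_one_entry _ hne, hA.1.2 i j (by exact h)]
  · intro i j hij
    have hne : i ≠ j := fun e => by rw [e] at hij; omega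
    rw [sub_one_entry _ hne]
    have h1 : (i:ℕ) + 1 < n := by rw [← hij]; exact j.isLt
    have : j = ⟨(i:ℕ)+1, h1⟩ := Fin.ext hij
    rw [this]
    exact hA.2 i h1

lemma commute_sub_one {n : ℕ} {A B : Matrix (Fin n) (Fin n) F} :
    B * A = A * B ↔ B * (A - 1) = (A - 1) * B := by
  rw [Matrix.mul_sub, Matrix.sub_mul, Matrix.mul_one, Matrix.one_mul, sub_left_inj]

lemma polys_commute {n : ℕ} (N : Matrix (Fin n) (Fin n) F) (c d : Fin n → F) :
    (∑ k : Fin n, c k • N ^ (k:ℕ)) * (∑ k : Fin n, d k • N ^ (k:ℕ)) =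
    (∑ k : Fin n, d k • N ^ (k:ℕ)) * (∑ k : Fin n, c k • N ^ (k:ℕ)) := by
  rw [Finset.sum_mul_sum, Finset.sum_mul_sum]
  rw [Finset.sum_comm]
  apply Finset.sum_congr rfl; intro k _
  apply Finset.sum_congr rfl; intro l _
  rw [smul_mul_assoc, smul_mul_assoc, mul_smul_comm, mul_smul_comm,
    ← pow_add, ← pow_add, Nat.add_comm, smul_comm (c l)]

lemma poly_commutes_N {n : ℕ} (N : Matrix (Fin n) (Fin n) F) (c : Fin n → F) :
    (∑ k : Fin n, c k • N ^ (k:ℕ)) * N = N * (∑ k : Fin n, c k • N ^ (k:ℕ)) := by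
  rw [Finset.sum_mul, Finset.mul_sum]
  apply Finset.sum_congr rfl; intro l _
  rw [smul_mul_assoc, mul_smul_comm, ← pow_succ, ← pow_succ']

section PolyEntries

variable {m : ℕ}

local notation "o0" => (⟨0, by omega⟩ : Fin (m+2))
local notation "o1" => (⟨1, by omega⟩ : Fin (m+2))

variable {N : Matrix (Fin (m+2)) (Fin (m+2)) F} (hSU : SU N) (c : Fin (m+2) → F)

lemma poly_entry (i j : Fin (m+2)) :
    (∑ k : Fin (m+2), c k • N ^ (k:ℕ)) i j = ∑ k : Fin (m+2), c k * (N ^ (k:ℕ)) i j := by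
  rw [Matrix.sum_apply]
  exact Finset.sum_congr rfl fun k _ => rfl

include hSU

lemma poly_diag (i : Fin (m+2)) : (∑ k : Fin (m+2), c k • N ^ (k:ℕ)) i i = c o0 := by
  rw [poly_entry, Finset.sum_eq_single o0]
  · simp
  · intro k _ hk
    have hk' : 1 ≤ (k:ℕ) := by
      rcases Nat.eq_zero_or_pos (k:ℕ) with h | h
      · exact absurd (Fin.ext h) hk
      · exact h
    rw [pow_entry_eq_zero hSU.1 _ i i (by omega), mul_zero]
  · intro h; exact absurd (Finset.mem_univ _) h

lemma poly_lower {i j : Fin (m+2)} (h : (j:ℕ) < (i:ℕ)) :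
    (∑ k : Fin (m+2), c k • N ^ (k:ℕ)) i j = 0 := by
  rw [poly_entry]
  apply Finset.sum_eq_zero
  intro k _
  rw [pow_entry_eq_zero hSU.1 _ i j (by omega), mul_zero]

lemma poly_superdiag {i j : Fin (m+2)} (h : (j:ℕ) = (i:ℕ) + 1) :
    (∑ k : Fin (m+2), c k • N ^ (k:ℕ)) i j = c o1 * N i j := by
  rw [poly_entry, Finset.sum_eq_single o1]
  · rw [pow_one]
  · intro k _ hk
    have hk' : (k:ℕ) ≠ 1 := fun e => hk (Fin.ext e)
    rcases Nat.eq_zero_or_pos (k:ℕ) with h0 | h0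
    · have hij : i ≠ j := fun e => by rw [e] at h; omega
      rw [h0, pow_zero, Matrix.one_apply_ne hij, mul_zero]
    · rw [pow_entry_eq_zero hSU.1 _ i j (by omega), mul_zero]
  · intro h; exact absurd (Finset.mem_univ _) h

lemma poly_row0 {j : Fin (m+2)} (h2 : 2 ≤ (j:ℕ)) (hN0 : N o0 j = 0)
    (hcz : ∀ k : Fin (m+2), 2 ≤ (k:ℕ) → (k:ℕ) < (j:ℕ) → c k = 0) :
    (∑ k : Fin (m+2), c k • N ^ (k:ℕ)) o0 j = c j * (N ^ (j:ℕ)) o0 j := by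
  rw [poly_entry, Finset.sum_eq_single j]
  · intro k _ hk
    have hk' : (k:ℕ) ≠ (j:ℕ) := fun e => hk (Fin.ext e)
    rcases Nat.lt_or_ge (k:ℕ) (j:ℕ) with hlt | hge
    · rcases Nat.eq_zero_or_pos (k:ℕ) with h0 | h0
      · have hij : (⟨0, by omega⟩ : Fin (m+2)) ≠ j := fun e => by
          have := congrArg Fin.val e; simp at this; omega
        rw [h0, pow_zero, Matrix.one_apply_ne hij, mul_zero]
      · rcases Nat.eq_or_lt_of_le h0 with h1 | h1
        · have e1 : (k:ℕ) = 1 := h1.symm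
          rw [e1, pow_one, hN0, mul_zero]
        · rw [hcz k (by omega) hlt, zero_mul]
    · rw [pow_entry_eq_zero hSU.1 _ o0 j (by simp; omega), mul_zero]
  · intro h; exact absurd (Finset.mem_univ _) h

lemma Spred_poly (hc0 : c o0 = 1) (hc1 : c o1 ≠ 0) :
    Spred (∑ k : Fin (m+2), c k • N ^ (k:ℕ)) := by
  refine ⟨⟨fun i => by rw [poly_diag hSU, hc0], fun i j hij => poly_lower hSU c hij⟩, ?_⟩
  intro i h
  rw [poly_superdiag hSU c (by simp)]
  exact mul_ne_zero hc1 (hSU.2 i _ (by simp))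

end PolyEntries

section Norm

variable {m : ℕ}

local notation "o0" => (⟨0, by omega⟩ : Fin (m+2))
local notation "o1" => (⟨1, by omega⟩ : Fin (m+2))

def NormP (A : Matrix (Fin (m+2)) (Fin (m+2)) F) : Prop :=
  Spred A ∧ A o0 o1 = 1 ∧ ∀ j : Fin (m+2), 2 ≤ (j:ℕ) → A o0 j = 0

lemma o0_ne_o1 : (o0 : Fin (m+2)) ≠ o1 := by
  intro h; exact absurd (congrArg Fin.val h) (by simp)

lemma norm_unique {A B : Matrix (Fin (m+2)) (Fin (m+2)) F} (hA : NormP A) (hB : NormP B)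
    (hcomm : B * A = A * B) : B = A := by
  classical
  have hSU : SU (A - 1) := SU_of hA.1
  obtain ⟨c, hc⟩ := exists_poly (by omega) hSU (commute_sub_one.mp hcomm)
  have hc0 : c o0 = 1 := by
    have h1 := poly_diag hSU c o0
    rw [← hc] at h1
    rw [← h1, hB.1.1.1]
  have hN01 : (A - 1) o0 o1 = 1 := by rw [sub_one_entry A o0_ne_o1, hA.2.1]
  have hc1 : c o1 = 1 := by
    have h1 := poly_superdiag hSU c (i := o0) (j := o1) (by simp)
    rw [← hc, hN01, mul_one, hB.2.1] at h1
    exact h1.symm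
  have hcz : ∀ v : ℕ, ∀ k : Fin (m+2), (k:ℕ) = v → 2 ≤ (k:ℕ) → c k = 0 := by
    intro v
    induction v using Nat.strong_induction_on with
    | _ v ih =>
      intro k hkv hk2
      have hne : (o0 : Fin (m+2)) ≠ k := fun e => by
        have := congrArg Fin.val e; simp at this; omega
      have hN0k : (A - 1) o0 k = 0 := by rw [sub_one_entry A hne, hA.2.2 k hk2]
      have h1 := poly_row0 hSU c hk2 hN0k
        (fun k' h2' hlt' => ih (k':ℕ) (hkv ▸ hlt') k' rfl h2')
      rw [← hc, hB.2.2 k hk2] at h1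
      have h2 := pow_entry_ne_zero hSU (k:ℕ) o0 k (by simp)
      rcases mul_eq_zero.mp h1.symm with h | h
      · exact h
      · exact absurd h h2
  have hval : ∀ k : Fin (m+2), c k • (A - 1) ^ (k:ℕ) =
      (if k = o0 then (1 : Matrix (Fin (m+2)) (Fin (m+2)) F) else 0) +
      (if k = o1 then (A - 1) else 0) := by
    intro k
    rcases Nat.lt_or_ge (k:ℕ) 2 with h | h
    · rcases Nat.lt_or_ge (k:ℕ) 1 with h1 | h1
      · have hk : k = o0 := Fin.ext (by show (k:ℕ) = 0; omega)
        rw [hk, if_pos rfl, if_neg o0_ne_o1, add_zero, hc0, pow_zero]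
        simp
      · have hk : k = o1 := Fin.ext (by simp; omega)
        rw [hk, if_neg (Ne.symm o0_ne_o1), if_pos rfl, zero_add, hc1, pow_one]
        simp
    · have h0 : k ≠ o0 := fun e => by rw [e] at h; simp at h
      have h1 : k ≠ o1 := fun e => by rw [e] at h; simp at h
      rw [if_neg h0, if_neg h1, add_zero, hcz (k:ℕ) k rfl h, zero_smul]
  rw [hc, Finset.sum_congr rfl (fun k _ => hval k), Finset.sum_add_distrib,
    Finset.sum_ite_eq' Finset.univ o0 (fun _ => (1 : Matrix (Fin (m+2)) (Fin (m+2)) F)),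
    Finset.sum_ite_eq' Finset.univ o1 (fun _ => A - 1), if_pos (Finset.mem_univ _),
    if_pos (Finset.mem_univ _), add_sub_cancel]

lemma norm_exists {A : Matrix (Fin (m+2)) (Fin (m+2)) F} (hA : Spred A) :
    ∃ B, NormP B ∧ B * A = A * B := by
  classical
  have hSU : SU (A - 1) := SU_of hA
  have pz := pow_entry_eq_zero hSU.1
  have pnz := pow_entry_ne_zero hSU
  set M0 : Matrix (Fin (m+2)) (Fin (m+2)) F :=
    Matrix.of (fun j k : Fin (m+2) => ((A - 1)^(k:ℕ)) o0 j) with hM0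
  have htri : M0.BlockTriangular OrderDual.toDual := by
    intro i j hij
    have hij' : (i:ℕ) < (j:ℕ) := hij
    exact pz _ _ _ (by simp; omega)
  have hdet : IsUnit M0.det := by
    rw [Matrix.det_of_lowerTriangular M0 htri]
    apply isUnit_iff_ne_zero.mpr
    apply Finset.prod_ne_zero_iff.2
    intro i _
    exact pnz _ _ _ (by simp)
  set t : Fin (m+2) → F := fun j => if (j:ℕ) ≤ 1 then (1:F) else 0 with ht
  set c : Fin (m+2) → F := M0⁻¹ *ᵥ t with hcdef
  have hMc : M0 *ᵥ c = t := by
    rw [hcdef, Matrix.mulVec_mulVec, Matrix.mul_nonsing_inv M0 hdet, Matrix.one_mulVec]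
  set B : Matrix (Fin (m+2)) (Fin (m+2)) F := ∑ k : Fin (m+2), c k • (A - 1) ^ (k:ℕ) with hB
  have hrow : ∀ j : Fin (m+2), B o0 j = t j := by
    intro j
    have h1 : B o0 j = ∑ k : Fin (m+2), M0 j k * c k := by
      rw [hB, poly_entry]
      exact Finset.sum_congr rfl fun k _ => mul_comm _ _
    rw [h1, ← hMc]
    rfl
  have hc0 : c o0 = 1 := by
    have h1 := poly_diag hSU c o0
    rw [← hB] at h1
    rw [← h1, hrow]
    simp [ht]
  have hc1 : c o1 ≠ 0 := by
    have h1 := poly_superdiag hSU c (i := o0) (j := o1) (by simp)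
    rw [← hB, hrow] at h1
    have h2 : c o1 * (A - 1) o0 o1 = 1 := by rw [← h1]; simp [ht]
    exact left_ne_zero_of_mul_eq_one h2
  refine ⟨B, ⟨?_, ?_, ?_⟩, ?_⟩
  · rw [hB]; exact Spred_poly hSU c hc0 hc1
  · rw [hrow]; simp [ht]
  · intro j hj
    rw [hrow]
    simp only [ht]
    rw [if_neg (by omega)]
  · apply commute_sub_one.mpr
    rw [hB]
    exact poly_commutes_N (A - 1) c

open scoped Classical in
/-- the normal form map -/
noncomputable def Phi (A : Matrix (Fin (m+2)) (Fin (m+2)) F) : Matrix (Fin (m+2)) (Fin (m+2)) F :=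
  if h : ∃ B, NormP B ∧ B * A = A * B then h.choose else A

lemma Phi_spec {A : Matrix (Fin (m+2)) (Fin (m+2)) F} (hA : Spred A) :
    NormP (Phi A) ∧ (Phi A) * A = A * (Phi A) := by
  have h : ∃ B, NormP B ∧ B * A = A * B := norm_exists hA
  classical
  rw [Phi, dif_pos h]
  exact h.choose_spec

lemma commute_trans {A X Y : Matrix (Fin (m+2)) (Fin (m+2)) F} (hA : Spred A)
    (hX : X * A = A * X) (hY : Y * A = A * Y) : X * Y = Y * X := by
  have hSU : SU (A - 1) := SU_of hA
  obtain ⟨cx, hcx⟩ := exists_poly (by omega) hSU (commute_sub_one.mp hX)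
  obtain ⟨cy, hcy⟩ := exists_poly (by omega) hSU (commute_sub_one.mp hY)
  rw [hcx, hcy]
  exact polys_commute _ _ _

lemma commute_iff_phi {A A' : Matrix (Fin (m+2)) (Fin (m+2)) F} (hA : Spred A)
    (hA' : Spred A') : A * A' = A' * A ↔ Phi A = Phi A' := by
  obtain ⟨hnA, hcA⟩ := Phi_spec hA
  obtain ⟨hnA', hcA'⟩ := Phi_spec hA'
  constructor
  · intro h
    have h1 : Phi A * A' = A' * Phi A := commute_trans hA hcA h.symm
    have h2 : Phi A * Phi A' = Phi A' * Phi A := commute_trans hA' h1 hcA'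
    exact norm_unique hnA' hnA h2
  · intro h
    have hPS : Spred (Phi A) := hnA.1
    have h1 : A * Phi A = Phi A * A := hcA.symm
    have h2 : A' * Phi A = Phi A * A' := by rw [h]; exact hcA'.symm
    exact commute_trans hPS h1 h2

def normEquiv : {A : Matrix (Fin (m+2)) (Fin (m+2)) F // NormP A} ≃
    (({i : Fin (m+2) // 1 ≤ (i:ℕ) ∧ (i:ℕ) + 1 < m+2} → {x : F // x ≠ 0}) ×
     ({p : Fin (m+2) × Fin (m+2) // 1 ≤ (p.1:ℕ) ∧ (p.1:ℕ) + 1 < (p.2:ℕ)} → F)) where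
  toFun A :=
    (fun i => ⟨A.1 i.1 ⟨(i.1:ℕ)+1, i.2.2⟩, A.2.1.2 i.1 i.2.2⟩,
     fun p => A.1 p.1.1 p.1.2)
  invFun uf := by
    refine ⟨Matrix.of (fun i j =>
      if h1 : (j:ℕ) < (i:ℕ) then (0:F)
      else if h2 : (j:ℕ) = (i:ℕ) then 1
      else if h0 : (i:ℕ) = 0 then (if (j:ℕ) = 1 then 1 else 0)
      else if hj : (j:ℕ) = (i:ℕ)+1 then
        (uf.1 ⟨i, by omega, by have := j.isLt; omega⟩ : F)
      else uf.2 ⟨(i, j), by simp; omega⟩), ?_, ?_, ?_⟩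
    · refine ⟨⟨fun i => ?_, fun i j hij => ?_⟩, fun i h => ?_⟩
      · simp only [Matrix.of_apply, Fin.val_mk]
        split_ifs <;> first | rfl | omega
      · have hij' : (j:ℕ) < (i:ℕ) := hij
        simp only [Matrix.of_apply]
        rw [dif_pos hij']
      · simp only [Matrix.of_apply, Fin.val_mk]
        split_ifs <;>
          first | omega | exact one_ne_zero | exact (uf.1 _).2
    · simp only [Matrix.of_apply, Fin.val_mk]
      split_ifs <;> first | rfl | omega
    · intro j hj
      simp only [Matrix.of_apply, Fin.val_mk]
      split_ifs <;> first | rfl | omega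
  left_inv A := by
    apply Subtype.ext
    apply Matrix.ext
    intro i j
    obtain ⟨A, hN⟩ := A
    simp only [Matrix.of_apply]
    by_cases h1 : (j:ℕ) < (i:ℕ)
    · rw [dif_pos h1, hN.1.1.2 i j h1]
    rw [dif_neg h1]
    by_cases h2 : (j:ℕ) = (i:ℕ)
    · have hji : j = i := Fin.ext h2
      rw [dif_pos h2, hji, hN.1.1.1]
    rw [dif_neg h2]
    by_cases h0 : (i:ℕ) = 0
    · rw [dif_pos h0]
      have hio : i = o0 := Fin.ext h0
      rw [hio]
      by_cases hj1 : (j:ℕ) = 1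
      · have hjo : j = o1 := Fin.ext hj1
        rw [if_pos hj1, hjo, hN.2.1]
      · rw [if_neg hj1, hN.2.2 j (by omega)]
    rw [dif_neg h0]
    by_cases hj : (j:ℕ) = (i:ℕ)+1
    · rw [dif_pos hj]
      have hje : (⟨(i:ℕ)+1, by have := j.isLt; omega⟩ : Fin (m+2)) = j := Fin.ext hj.symm
      simp only [hje]
    · rw [dif_neg hj]
  right_inv uf := by
    obtain ⟨u, f⟩ := uf
    refine Prod.ext (funext fun i => ?_) (funext fun p => ?_)
    · apply Subtype.ext
      obtain ⟨i, hi1, hi2⟩ := i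
      simp only [Matrix.of_apply, Fin.val_mk]
      rw [dif_neg (by omega), dif_neg (by omega), dif_neg (by omega)]
      rfl
    · obtain ⟨⟨a, b⟩, hab⟩ := p
      simp only at hab
      have hab1 := hab.1
      have hab2 := hab.2
      simp only [Matrix.of_apply]
      have hb := b.isLt
      rw [dif_neg (by omega), dif_neg (by omega), dif_neg (by omega), dif_neg (by omega)]

end Norm

lemma omega_eq {M : Type*} [Monoid M] (X : Set M) (T : Finset M) (hT : ↑T ⊆ X)
    (hpair : ∀ x ∈ T, ∀ y ∈ T, x ≠ y → x * y ≠ y * x)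
    (hbound : ∀ N : Finset M, ↑N ⊆ X →
      (∀ x ∈ N, ∀ y ∈ N, x ≠ y → x * y ≠ y * x) → N.card ≤ T.card) :
    omegaM X = T.card := by
  unfold omegaM
  have hne : {k : ℕ | ∃ N : Finset M, ↑N ⊆ X ∧
      (∀ x ∈ N, ∀ y ∈ N, x ≠ y → x * y ≠ y * x) ∧ N.card = k}.Nonempty :=
    ⟨0, ∅, by simp, by simp, rfl⟩
  apply le_antisymm
  · apply csSup_le hne
    rintro k ⟨N, h1, h2, rfl⟩
    exact hbound N h1 h2
  · exact le_csSup ⟨T.card, by rintro k ⟨N, h1, h2, rfl⟩; exact hbound N h1 h2⟩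
      ⟨T, hT, hpair, rfl⟩

lemma omega_singleton {M : Type*} [Monoid M] (X : Set M) (x : M) (hx : x ∈ X)
    (hsub : X ⊆ {x}) : omegaM X = 1 := by
  have := omega_eq X {x} (by simpa using hx)
    (by intro a ha b hb hab; simp at ha hb; rw [ha, hb] at hab; exact absurd rfl hab)
    (by
      intro N h1 _
      rw [Finset.card_singleton]
      apply Finset.card_le_one.mpr
      intro a ha b hb
      have ha' : a ∈ ({x} : Set M) := hsub (h1 ha)
      have hb' : b ∈ ({x} : Set M) := hsub (h1 hb)
      simp at ha' hb'; rw [ha', hb'])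
  simpa using this

lemma cardLT (m : ℕ) : Nat.card {p : Fin m × Fin m // (p.1:ℕ) < (p.2:ℕ)} = m.choose 2 := by
  have e : {p : Fin m × Fin m // (p.1:ℕ) < (p.2:ℕ)} ≃ (Σ b : Fin m, Fin (b:ℕ)) :=
    { toFun := fun p => ⟨p.1.2, ⟨(p.1.1:ℕ), p.2⟩⟩
      invFun := fun q => ⟨(⟨(q.2:ℕ), lt_trans q.2.isLt q.1.isLt⟩, q.1), q.2.isLt⟩
      left_inv := fun p => by
        apply Subtype.ext
        apply Prod.ext <;> simp
      right_inv := fun q => by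
        apply Sigma.ext <;> simp }
  rw [Nat.card_congr e, Nat.card_eq_fintype_card, Fintype.card_sigma]
  simp only [Fintype.card_fin]
  rw [Fin.sum_univ_eq_sum_range (fun i => i) m]
  have h2 := Finset.sum_range_id_mul_two m
  have h3 := Nat.choose_two_right m
  omega

lemma cardI1 (m : ℕ) : Nat.card {i : Fin (m+2) // 1 ≤ (i:ℕ) ∧ (i:ℕ) + 1 < m+2} = m := by
  have e : {i : Fin (m+2) // 1 ≤ (i:ℕ) ∧ (i:ℕ) + 1 < m+2} ≃ Fin m :=
    { toFun := fun i => ⟨(i.1:ℕ) - 1, by have := i.2; omega⟩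
      invFun := fun k => ⟨⟨(k:ℕ)+1, by have := k.isLt; omega⟩,
        by have := k.isLt; simp only [Fin.val_mk]; omega⟩
      left_inv := fun i => by
        apply Subtype.ext; apply Fin.ext; have := i.2; simp; omega
      right_inv := fun k => by apply Fin.ext; simp }
  rw [Nat.card_congr e, Nat.card_eq_fintype_card, Fintype.card_fin]

lemma cardI2 (m : ℕ) :
    Nat.card {p : Fin (m+2) × Fin (m+2) // 1 ≤ (p.1:ℕ) ∧ (p.1:ℕ) + 1 < (p.2:ℕ)} =
    m.choose 2 := by
  have e : {p : Fin (m+2) × Fin (m+2) // 1 ≤ (p.1:ℕ) ∧ (p.1:ℕ) + 1 < (p.2:ℕ)} ≃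
      {p : Fin m × Fin m // (p.1:ℕ) < (p.2:ℕ)} :=
    { toFun := fun p => ⟨(⟨(p.1.1:ℕ) - 1, by
          have h1 := p.2.1; have h2 := p.2.2; have h3 := p.1.2.isLt; omega⟩,
        ⟨(p.1.2:ℕ) - 2, by have h1 := p.2.1; have h2 := p.2.2; have h3 := p.1.2.isLt; omega⟩),
        by have h1 := p.2.1; have h2 := p.2.2; simp; omega⟩
      invFun := fun p => ⟨(⟨(p.1.1:ℕ)+1, by have := p.1.1.isLt; omega⟩,
        ⟨(p.1.2:ℕ)+2, by have := p.1.2.isLt; omega⟩),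
        by have := p.2; simp only [Fin.val_mk]; omega⟩
      left_inv := fun p => by
        apply Subtype.ext
        have h1 := p.2.1; have h2 := p.2.2
        apply Prod.ext <;> (apply Fin.ext; simp; omega)
      right_inv := fun p => by
        apply Subtype.ext
        apply Prod.ext <;> (apply Fin.ext; simp) }
  rw [Nat.card_congr e, cardLT]

lemma card_ne_zero (F : Type*) [Field F] [Fintype F] :
    Nat.card {x : F // x ≠ 0} = Fintype.card F - 1 := by
  rw [Nat.card_congr (unitsEquivNeZero (G₀ := F)).symm, Nat.card_units,
    Nat.card_eq_fintype_card]

variable [Fintype F]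

lemma main (m : ℕ) : omegaM {A : Matrix (Fin (m+2)) (Fin (m+2)) F | Spred A} =
    (Fintype.card F - 1) ^ m * Fintype.card F ^ Nat.choose m 2 := by
  classical
  set T : Finset (Matrix (Fin (m+2)) (Fin (m+2)) F) := Finset.univ.filter NormP with hT
  have hcard : T.card = (Fintype.card F - 1) ^ m * Fintype.card F ^ Nat.choose m 2 := by
    have h1 : T.card = Nat.card {A : Matrix (Fin (m+2)) (Fin (m+2)) F // NormP A} := by
      rw [Nat.card_eq_fintype_card, Fintype.card_subtype]
    rw [h1, Nat.card_congr (normEquiv (F := F) (m := m)), Nat.card_prod, Nat.card_fun,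
      Nat.card_fun, card_ne_zero, cardI1, cardI2, Nat.card_eq_fintype_card (α := F)]
  rw [← hcard]
  apply omega_eq
  · intro A hA
    exact ((Finset.mem_filter.mp hA).2).1
  · intro x hx y hy hxy hc
    exact hxy (norm_unique (Finset.mem_filter.mp hy).2 (Finset.mem_filter.mp hx).2 hc)
  · intro Nx h1 h2
    apply Finset.card_le_card_of_injOn Phi
    · intro a ha
      exact Finset.mem_filter.mpr ⟨Finset.mem_univ _, (Phi_spec (h1 ha)).1⟩
    · intro a ha b hb hab
      by_contra hne
      exact h2 a ha b hb hne ((commute_iff_phi (h1 ha) (h1 hb)).mpr hab)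

lemma small0 : omegaM {A : Matrix (Fin 0) (Fin 0) F | Spred A} = 1 := by
  apply omega_singleton _ 1
  · exact ⟨⟨fun i => i.elim0, fun i j _ => i.elim0⟩, fun i h => i.elim0⟩
  · intro A _
    have : A = 1 := by ext i j; exact i.elim0
    simp [this]

lemma small1 : omegaM {A : Matrix (Fin 1) (Fin 1) F | Spred A} = 1 := by
  apply omega_singleton _ 1
  · refine ⟨⟨fun i => Matrix.one_apply_eq i, fun i j h => Matrix.one_apply_ne ?_⟩,
      fun i h => absurd h (by have := i.isLt; omega)⟩
    intro e; rw [e] at h; exact lt_irrefl _ h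
  · intro A hA
    have : A = 1 := by
      ext i j
      have e : i = j := Subsingleton.elim i j
      subst e
      rw [hA.1.1 i, Matrix.one_apply_eq]
    simp [this]

end Stmt8

theorem stmt8 {n : ℕ} {F : Type*} [Field F] [Fintype F] :
    omegaM {A : Matrix (Fin n) (Fin n) F | IsUU A ∧
        ∀ i : Fin n, ∀ h : (i : ℕ) + 1 < n, A i ⟨(i : ℕ) + 1, h⟩ ≠ 0} =
      (Fintype.card F - 1) ^ (n - 2) * Fintype.card F ^ Nat.choose (n - 2) 2 := by
  rcases n with _ | _ | m
  · have h : (Fintype.card F - 1) ^ (0 - 2) * Fintype.card F ^ Nat.choose (0 - 2) 2 = 1 := by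
      norm_num
    rw [h]
    exact Stmt8.small0
  · have h : (Fintype.card F - 1) ^ (1 - 2) * Fintype.card F ^ Nat.choose (1 - 2) 2 = 1 := by
      norm_num
    rw [h]
    exact Stmt8.small1
  · exact Stmt8.main m
end

section
/- Let T_1 = {A ∈ UU_4(F_q) : a_{34} = 0}. Then T_1 is a subgroup of UU_4(F_q), its center Z(T_1) = {A ∈ T_1 : a_{12} = a_{23} = a_{34} = a_{24} = 0} has order q², the centralizer in T_1 of every noncentral element of T_1 is abelian (T_1 is an AC-group), and ω(T_1) = q² + 1. -/
/-- `T₁ = {A ∈ UU₄(F_q) : a₃₄ = 0}` (0-indexed: entry `(2,3)` vanishes). -/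
def T1 (F : Type*) [Field F] : Set (Matrix (Fin 4) (Fin 4) F) :=
  {A | IsUU A ∧ A 2 3 = 0}

/-- The claimed center of `T₁`: only entries `(1,3)` and `(1,4)` (0-indexed `(0,2)`,
`(0,3)`) are free. -/
def ZT1 (F : Type*) [Field F] : Set (Matrix (Fin 4) (Fin 4) F) :=
  {A | A ∈ T1 F ∧ A 0 1 = 0 ∧ A 1 2 = 0 ∧ A 1 3 = 0}

def Mk {F : Type*} [Field F] (a b c d e : F) : Matrix (Fin 4) (Fin 4) F :=
  !![1,a,b,c; 0,1,d,e; 0,0,1,0; 0,0,0,1]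

lemma Mk_mul {F : Type*} [Field F] (a b c d e a' b' c' d' e' : F) :
    Mk a b c d e * Mk a' b' c' d' e' =
      Mk (a+a') (b+a*d'+b') (c+a*e'+c') (d+d') (e+e') := by
  ext i j
  fin_cases i <;> fin_cases j <;>
    simp [Mk, Matrix.mul_apply, Fin.sum_univ_four, Matrix.vecHead, Matrix.vecTail] <;> ring

lemma Mk_eq_iff {F : Type*} [Field F] {a b c d e a' b' c' d' e' : F} :
    Mk a b c d e = Mk a' b' c' d' e' ↔ a = a' ∧ b = b' ∧ c = c' ∧ d = d' ∧ e = e' := by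
  constructor
  · intro h
    exact ⟨congrFun (congrFun h 0) 1, congrFun (congrFun h 0) 2,
      congrFun (congrFun h 0) 3, congrFun (congrFun h 1) 2, congrFun (congrFun h 1) 3⟩
  · rintro ⟨rfl, rfl, rfl, rfl, rfl⟩; rfl

lemma Mk_mem {F : Type*} [Field F] (a b c d e : F) : Mk a b c d e ∈ T1 F := by
  refine ⟨⟨fun i => ?_, fun i j h => ?_⟩, by simp [Mk]⟩
  · fin_cases i <;> simp [Mk]
  · fin_cases i <;> fin_cases j <;>
      first
        | exact absurd h (by decide)
        | simp [Mk, Matrix.vecHead, Matrix.vecTail]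

lemma eq_Mk {F : Type*} [Field F] {A : Matrix (Fin 4) (Fin 4) F} (hA : A ∈ T1 F) :
    A = Mk (A 0 1) (A 0 2) (A 0 3) (A 1 2) (A 1 3) := by
  obtain ⟨⟨hd, hl⟩, h23⟩ := hA
  ext i j
  fin_cases i <;> fin_cases j <;>
    simp [Mk] <;>
    first
      | exact hd _
      | exact h23
      | exact hl _ _ (by decide)

lemma commute_iff {F : Type*} [Field F] {a b c d e a' b' c' d' e' : F} :
    Mk a b c d e * Mk a' b' c' d' e' = Mk a' b' c' d' e' * Mk a b c d e ↔
      a * d' = a' * d ∧ a * e' = a' * e := by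
  rw [Mk_mul, Mk_mul, Mk_eq_iff]
  constructor
  · rintro ⟨-, h2, h3, -, -⟩
    exact ⟨by linear_combination h2, by linear_combination h3⟩
  · rintro ⟨h1, h2⟩
    exact ⟨by ring, by linear_combination h1, by linear_combination h2, by ring, by ring⟩

lemma Mk_one {F : Type*} [Field F] : (Mk 0 0 0 0 0 : Matrix (Fin 4) (Fin 4) F) = 1 := by
  ext i j
  fin_cases i <;> fin_cases j <;> simp [Mk, Matrix.one_apply, Matrix.vecHead, Matrix.vecTail]

theorem stmt9 {F : Type*} [Field F] [Fintype F] :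
    -- T₁ is a subgroup of UU₄(F_q)
    ((1 : Matrix (Fin 4) (Fin 4) F) ∈ T1 F) ∧
    (∀ A ∈ T1 F, ∀ B ∈ T1 F, A * B ∈ T1 F) ∧
    (∀ A ∈ T1 F, ∃ B ∈ T1 F, A * B = 1 ∧ B * A = 1) ∧
    -- its center is ZT1, of cardinality q²
    ({A ∈ T1 F | ∀ B ∈ T1 F, A * B = B * A} = ZT1 F) ∧
    (ZT1 F).ncard = Fintype.card F ^ 2 ∧
    -- T₁ is an AC-group: the centralizer in T₁ of any noncentral element is abelian
    (∀ A ∈ T1 F, A ∉ ZT1 F → ∀ B ∈ T1 F, ∀ C ∈ T1 F,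
      B * A = A * B → C * A = A * C → B * C = C * B) ∧
    -- ω(T₁) = q² + 1
    omegaM (T1 F) = Fintype.card F ^ 2 + 1 := by
  refine ⟨?_, ?_, ?_, ?_, ?_, ?_, ?_⟩
  · -- 1 ∈ T1
    rw [← Mk_one]; exact Mk_mem 0 0 0 0 0
  · -- closure
    intro A hA B hB
    rw [eq_Mk hA, eq_Mk hB, Mk_mul]
    exact Mk_mem _ _ _ _ _
  · -- inverses
    intro A hA
    set a := A 0 1; set b := A 0 2; set c := A 0 3; set d := A 1 2; set e := A 1 3
    refine ⟨Mk (-a) (a*d - b) (a*e - c) (-d) (-e), Mk_mem _ _ _ _ _, ?_, ?_⟩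
    · rw [eq_Mk hA, Mk_mul, ← Mk_one]
      exact Mk_eq_iff.mpr ⟨by ring, by ring, by ring, by ring, by ring⟩
    · rw [eq_Mk hA, Mk_mul, ← Mk_one]
      exact Mk_eq_iff.mpr ⟨by ring, by ring, by ring, by ring, by ring⟩
  · -- center
    ext A
    constructor
    · rintro ⟨hA, hcomm⟩
      have h1 := hcomm (Mk 1 0 0 0 0) (Mk_mem _ _ _ _ _)
      have h2 := hcomm (Mk 0 0 0 1 0) (Mk_mem _ _ _ _ _)
      rw [eq_Mk hA, commute_iff] at h1 h2
      refine ⟨hA, ?_, ?_, ?_⟩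
      · have := h2.1; simpa using this
      · have := h1.1; simpa using this.symm
      · have := h1.2; simpa using this.symm
    · rintro ⟨hA, h01, h12, h13⟩
      refine ⟨hA, fun B hB => ?_⟩
      rw [eq_Mk hA, eq_Mk hB, h01, h12, h13, commute_iff]
      exact ⟨by ring, by ring⟩
  · -- cardinality of center
    have himg : ZT1 F = (fun p : F × F => Mk 0 p.1 p.2 0 0) '' Set.univ := by
      ext A
      constructor
      · rintro ⟨hA, h01, h12, h13⟩
        refine ⟨(A 0 2, A 0 3), trivial, ?_⟩
        show Mk 0 (A 0 2) (A 0 3) 0 0 = A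
        have h := eq_Mk hA
        rw [h01, h12, h13] at h
        exact h.symm
      · rintro ⟨⟨b, c⟩, -, rfl⟩
        exact ⟨Mk_mem _ _ _ _ _, by simp [Mk], by simp [Mk], by simp [Mk]⟩
    rw [himg, Set.ncard_image_of_injective _ (fun p q h => ?_), Set.ncard_univ,
      Nat.card_eq_fintype_card, Fintype.card_prod, sq]
    obtain ⟨-, h1, h2, -, -⟩ := Mk_eq_iff.mp h
    exact Prod.ext h1 h2
  · -- AC group
    intro A hA hAZ B hB C hC hBA hCA
    set a := A 0 1 with ha'; set d := A 1 2 with hd'; set e := A 1 3 with he'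
    rw [eq_Mk hA, eq_Mk hB, commute_iff] at hBA
    rw [eq_Mk hA, eq_Mk hC, commute_iff] at hCA
    rw [eq_Mk hB, eq_Mk hC, commute_iff]
    obtain ⟨hB1, hB2⟩ := hBA
    obtain ⟨hC1, hC2⟩ := hCA
    by_cases ha : a = 0
    · -- then d ≠ 0 or e ≠ 0, and B, C have zero (0,1) entry
      have hde : ¬(d = 0 ∧ e = 0) := by
        intro ⟨hd0, he0⟩
        exact hAZ ⟨hA, ha, hd0, he0⟩
      have hB0 : B 0 1 = 0 := by
        rcases (not_and_or.mp hde) with h | h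
        · have := hB1; rw [← ha', ← hd', ha, zero_mul] at this
          exact (mul_eq_zero.mp this).resolve_right h
        · have := hB2; rw [← ha', ← he', ha, zero_mul] at this
          exact (mul_eq_zero.mp this).resolve_right h
      have hC0 : C 0 1 = 0 := by
        rcases (not_and_or.mp hde) with h | h
        · have := hC1; rw [← ha', ← hd', ha, zero_mul] at this
          exact (mul_eq_zero.mp this).resolve_right h
        · have := hC2; rw [← ha', ← he', ha, zero_mul] at this
          exact (mul_eq_zero.mp this).resolve_right h
      rw [hB0, hC0]
      exact ⟨by ring, by ring⟩
    · constructor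
      · apply mul_left_cancel₀ ha
        rw [← ha', ← hd'] at hB1 hC1
        linear_combination (C 0 1) * hB1 - (B 0 1) * hC1
      · apply mul_left_cancel₀ ha
        rw [← ha', ← he'] at hB2 hC2
        linear_combination (C 0 1) * hB2 - (B 0 1) * hC2
  · -- omega
    set S := {k : ℕ | ∃ N : Finset (Matrix (Fin 4) (Fin 4) F), ↑N ⊆ T1 F ∧
      (∀ x ∈ N, ∀ y ∈ N, x ≠ y → x * y ≠ y * x) ∧ N.card = k} with hS
    have hub : ∀ k ∈ S, k ≤ Fintype.card F ^ 2 + 1 := by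
      rintro k ⟨N, hNsub, hNnc, rfl⟩
      classical
      have := Finset.card_le_card_of_injOn
        (f := fun A : Matrix (Fin 4) (Fin 4) F =>
          if A 0 1 = 0 then (none : Option (F × F)) else some (A 1 2 / A 0 1, A 1 3 / A 0 1))
        (s := N) (t := (Finset.univ : Finset (Option (F × F))))
        (fun a _ => Finset.mem_univ _) ?_
      · calc N.card ≤ (Finset.univ : Finset (Option (F × F))).card := this
          _ = Fintype.card F ^ 2 + 1 := by
              simp [Fintype.card_option, Fintype.card_prod, sq]
      · intro x hx y hy hf
        dsimp only at hf
        by_contra hxy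
        apply hNnc x hx y hy hxy
        have hxT := hNsub hx
        have hyT := hNsub hy
        rw [eq_Mk hxT, eq_Mk hyT, commute_iff]
        by_cases hx0 : x 0 1 = 0
        · have hy0 : y 0 1 = 0 := by
            by_contra hy0
            rw [if_pos hx0, if_neg hy0] at hf
            exact (Option.some_ne_none _ hf.symm).elim
          rw [hx0, hy0]
          exact ⟨by ring, by ring⟩
        · have hy0 : y 0 1 ≠ 0 := by
            intro hy0
            rw [if_neg hx0, if_pos hy0] at hf
            exact Option.some_ne_none _ hf
          rw [if_neg hx0, if_neg hy0] at hf
          obtain ⟨h1, h2⟩ := Prod.mk.injEq .. ▸ Option.some_injective _ hf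
          constructor
          · field_simp at h1
            linear_combination -h1
          · field_simp at h2
            linear_combination -h2
    have hmem : Fintype.card F ^ 2 + 1 ∈ S := by
      classical
      refine ⟨Finset.image (fun o : Option (F × F) =>
        o.elim (Mk 0 0 0 1 0) (fun p => Mk 1 0 0 p.1 p.2)) Finset.univ, ?_, ?_, ?_⟩
      · intro A hA
        simp only [Finset.coe_image, Set.mem_image] at hA
        obtain ⟨o, -, rfl⟩ := hA
        cases o with
        | none => exact Mk_mem _ _ _ _ _
        | some p => exact Mk_mem _ _ _ _ _
      · intro x hx y hy hxy h
        simp only [Finset.mem_image, Finset.mem_univ, true_and] at hx hy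
        obtain ⟨o, rfl⟩ := hx
        obtain ⟨o', rfl⟩ := hy
        cases o with
        | none =>
          cases o' with
          | none => exact hxy rfl
          | some p =>
            simp only [Option.elim] at h
            obtain ⟨h1, -⟩ := commute_iff.mp h
            simp at h1
        | some p =>
          cases o' with
          | none =>
            simp only [Option.elim] at h
            obtain ⟨h1, -⟩ := commute_iff.mp h
            simp at h1
          | some p' =>
            simp only [Option.elim] at h
            obtain ⟨h1, h2⟩ := commute_iff.mp h
            simp only [one_mul] at h1 h2
            refine (hxy ?_).elim
            show Mk 1 0 0 p.1 p.2 = Mk 1 0 0 p'.1 p'.2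
            rw [h1, h2]
      · rw [Finset.card_image_of_injective _ ?_, Finset.card_univ,
          Fintype.card_option, Fintype.card_prod, sq]
        intro o o' h
        cases o with
        | none =>
          cases o' with
          | none => rfl
          | some p =>
            simp only [Option.elim] at h
            obtain ⟨h1, -⟩ := Mk_eq_iff.mp h
            exact absurd h1.symm one_ne_zero
        | some p =>
          cases o' with
          | none =>
            simp only [Option.elim] at h
            obtain ⟨h1, -⟩ := Mk_eq_iff.mp h
            exact absurd h1 one_ne_zero
          | some p' =>
            simp only [Option.elim] at h
            obtain ⟨-, -, -, h4, h5⟩ := Mk_eq_iff.mp h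
            exact congrArg some (Prod.ext h4 h5)
    exact le_antisymm (csSup_le ⟨_, hmem⟩ hub) (le_csSup ⟨_, hub⟩ hmem)
end

section
/- Let N_0 = {A ∈ UU_4(F_q) : a_{12}a_{23}a_{34} ≠ 0}. Then the maximum size of a pairwise non-commuting subset of N_0 is q(q−1)². -/
lemma mulUU {F : Type*} [Field F] (a b c x y z a' b' c' x' y' z' : F) :
    !![1,a,x,z; 0,1,b,y; 0,0,1,c; 0,0,0,1] * !![1,a',x',z'; 0,1,b',y'; 0,0,1,c'; 0,0,0,1]
      = !![1, a+a', x' + a*b' + x, z' + a*y' + x*c' + z;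
           0, 1, b+b', y' + b*c' + y;
           0, 0, 1, c+c';
           0, 0, 0, 1] := by
  ext i j
  fin_cases i <;> fin_cases j <;>
    simp [Matrix.mul_apply, Fin.sum_univ_four, Matrix.vecHead, Matrix.vecTail] <;> ring

lemma isUU_repr {F : Type*} [Field F] {A : Matrix (Fin 4) (Fin 4) F} (h : IsUU A) :
    A = !![1, A 0 1, A 0 2, A 0 3; 0, 1, A 1 2, A 1 3; 0, 0, 1, A 2 3; 0, 0, 0, 1] := by
  ext i j
  fin_cases i <;> fin_cases j <;>
    simp <;> first | exact h.1 _ | exact h.2 _ _ (by decide)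

lemma commUU {F : Type*} [Field F] {a b c x y z a' b' c' x' y' z' : F}
    (ha : a ≠ 0) (ha' : a' ≠ 0)
    (e1 : b * a' = b' * a) (e2 : c * a' = c' * a)
    (e3 : (a*y - x*c) * (a'*a') = (a'*y' - x'*c') * (a*a)) :
    !![1,a,x,z; 0,1,b,y; 0,0,1,c; 0,0,0,1] * !![1,a',x',z'; 0,1,b',y'; 0,0,1,c'; 0,0,0,1]
      = !![1,a',x',z'; 0,1,b',y'; 0,0,1,c'; 0,0,0,1] * !![1,a,x,z; 0,1,b,y; 0,0,1,c; 0,0,0,1] := by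
  have e4 : b * c' = b' * c := mul_left_cancel₀ ha (by linear_combination c * e1 - b * e2)
  have e5 : a * y' + x * c' = a' * y + x' * c :=
    mul_left_cancel₀ (mul_ne_zero ha ha') (by linear_combination -e3 - (x*a' + x'*a) * e2)
  rw [mulUU, mulUU]
  ext i j
  fin_cases i <;> fin_cases j <;> simp <;>
    first
      | linear_combination -e1
      | linear_combination e4
      | linear_combination e5
      | ring

open Classical in
noncomputable def fInj {F : Type*} [Field F] (A : Matrix (Fin 4) (Fin 4) F) : Fˣ × Fˣ × F :=
  if h : A 0 1 ≠ 0 ∧ A 1 2 ≠ 0 ∧ A 2 3 ≠ 0 then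
    (Units.mk0 (A 1 2 / A 0 1) (div_ne_zero h.2.1 h.1),
     Units.mk0 (A 2 3 / A 0 1) (div_ne_zero h.2.2 h.1),
     (A 0 1 * A 1 3 - A 0 2 * A 2 3) / (A 0 1 * A 0 1))
  else (1, 1, 0)

theorem stmt10 {F : Type*} [Field F] [Fintype F] :
    omegaM {A : Matrix (Fin 4) (Fin 4) F | IsUU A ∧ A 0 1 * A 1 2 * A 2 3 ≠ 0} =
      Fintype.card F * (Fintype.card F - 1) ^ 2 := by
  classical
  set X := {A : Matrix (Fin 4) (Fin 4) F | IsUU A ∧ A 0 1 * A 1 2 * A 2 3 ≠ 0} with hX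
  set m := Fintype.card F * (Fintype.card F - 1) ^ 2 with hm
  have hcard : Fintype.card (Fˣ × Fˣ × F) = m := by
    simp [Fintype.card_prod, Fintype.card_units, hm]
    ring
  -- upper bound
  have hub : ∀ k ∈ {k : ℕ | ∃ N : Finset (Matrix (Fin 4) (Fin 4) F), ↑N ⊆ X ∧
      (∀ x ∈ N, ∀ y ∈ N, x ≠ y → x * y ≠ y * x) ∧ N.card = k}, k ≤ m := by
    rintro k ⟨N, hNX, hNC, rfl⟩
    rw [← hcard, ← Finset.card_univ]
    apply Finset.card_le_card_of_injOn fInj (fun _ _ => Finset.mem_univ _)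
    intro A hA B hB hfAB
    simp only [Finset.mem_coe] at hA hB
    by_contra hne
    apply hNC A hA B hB hne
    obtain ⟨hAU, hAnz⟩ := hNX hA
    obtain ⟨hBU, hBnz⟩ := hNX hB
    have hA01 : A 0 1 ≠ 0 := fun h => hAnz (by rw [h]; ring)
    have hA12 : A 1 2 ≠ 0 := fun h => hAnz (by rw [h]; ring)
    have hA23 : A 2 3 ≠ 0 := fun h => hAnz (by rw [h]; ring)
    have hB01 : B 0 1 ≠ 0 := fun h => hBnz (by rw [h]; ring)
    have hB12 : B 1 2 ≠ 0 := fun h => hBnz (by rw [h]; ring)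
    have hB23 : B 2 3 ≠ 0 := fun h => hBnz (by rw [h]; ring)
    rw [fInj, fInj, dif_pos ⟨hA01, hA12, hA23⟩, dif_pos ⟨hB01, hB12, hB23⟩] at hfAB
    simp only [Prod.mk.injEq, Units.mk0_inj] at hfAB
    obtain ⟨h1, h2, h3⟩ := hfAB
    have e1 : A 1 2 * B 0 1 = B 1 2 * A 0 1 := by
      field_simp at h1; linear_combination h1
    have e2 : A 2 3 * B 0 1 = B 2 3 * A 0 1 := by
      field_simp at h2; linear_combination h2
    have e3 : (A 0 1 * A 1 3 - A 0 2 * A 2 3) * (B 0 1 * B 0 1)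
        = (B 0 1 * B 1 3 - B 0 2 * B 2 3) * (A 0 1 * A 0 1) :=
      (div_eq_div_iff (mul_ne_zero hA01 hA01) (mul_ne_zero hB01 hB01)).1 h3
    rw [isUU_repr hAU, isUU_repr hBU]
    exact commUU hA01 hB01 e1 e2 e3
  -- lower bound construction
  set g : Fˣ × Fˣ × F → Matrix (Fin 4) (Fin 4) F := fun p =>
    !![1, 1, 0, 0; 0, 1, (p.1 : F), p.2.2; 0, 0, 1, (p.2.1 : F); 0, 0, 0, 1] with hg
  have hginj : Function.Injective g := by
    intro p q h
    have h12 := congrFun (congrFun h 1) 2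
    have h23 := congrFun (congrFun h 2) 3
    have h13 := congrFun (congrFun h 1) 3
    simp only [hg] at h12 h23 h13
    norm_num at h12 h23 h13
    exact Prod.ext (Units.ext h12) (Prod.ext (Units.ext h23) h13)
  have hmem : m ∈ {k : ℕ | ∃ N : Finset (Matrix (Fin 4) (Fin 4) F), ↑N ⊆ X ∧
      (∀ x ∈ N, ∀ y ∈ N, x ≠ y → x * y ≠ y * x) ∧ N.card = k} := by
    refine ⟨Finset.univ.image g, ?_, ?_, ?_⟩
    · intro A hA
      simp only [Finset.coe_image, Finset.coe_univ, Set.image_univ, Set.mem_range] at hA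
      obtain ⟨p, rfl⟩ := hA
      constructor
      · constructor
        · intro i; fin_cases i <;> rfl
        · intro i j hij
          fin_cases i <;> fin_cases j <;> first | rfl | exact absurd hij (by decide)
      · show g p 0 1 * g p 1 2 * g p 2 3 ≠ 0
        simp [hg]
    · intro u hu v hv huv hc
      simp only [Finset.mem_image, Finset.mem_univ, true_and] at hu hv
      obtain ⟨p, rfl⟩ := hu
      obtain ⟨q, rfl⟩ := hv
      apply huv
      simp only [hg, mulUU] at hc
      have h02 := congrFun (congrFun hc 0) 2
      have h03 := congrFun (congrFun hc 0) 3
      have h13 := congrFun (congrFun hc 1) 3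
      norm_num at h02 h03 h13
      have hb : p.1 = q.1 := Units.ext h02.symm
      have hy : p.2.2 = q.2.2 := h03.symm
      have hcq : p.2.1 = q.2.1 := by
        apply Units.ext
        have := h13
        rw [hb] at this
        have h' : (q.1 : F) * (q.2.1 : F) = (q.1 : F) * (p.2.1 : F) := by
          have h3 : q.2.2 + (q.1 : F) * (q.2.1 : F) + p.2.2 = p.2.2 + (q.1 : F) * (p.2.1 : F) + q.2.2 := this
          linear_combination h3
        exact (mul_left_cancel₀ (q.1 : Fˣ).ne_zero h').symm
      apply congrArg g
      exact Prod.ext hb (Prod.ext hcq hy)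
    · rw [Finset.card_image_of_injective _ hginj, Finset.card_univ, hcard]
  exact le_antisymm (csSup_le ⟨0, ∅, by simp⟩ hub) (le_csSup ⟨m, hub⟩ hmem)
end

section
/- Fix y ∈ F_q* with y ≠ 1 and suppose q > 2. In M = F_q × F_q* × F_q with commuting relation x₁y₂ − y₁x₂ = z₁ − z₂, the set {(z, y, z) : z ∈ F_q} ∪ {(m+1, 1, 1) : m ∈ F_q, m ≠ y⁻¹ − 1} ∪ {(y⁻¹ − 1, 1, 0)} is a pairwise non-commuting set of 2q elements. Hence ω(M) ≥ 2q. -/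
/-- The commuting relation on `F³`: `(x₁,y₁,z₁) C (x₂,y₂,z₂)` iff
`x₁y₂ − y₁x₂ = z₁ − z₂`. -/
def rel {F : Type*} [Field F] (p q : F × F × F) : Prop :=
  p.1 * q.2.1 - p.2.1 * q.1 = p.2.2 - q.2.2

/-- The non-commuting structure `M = F × F* × F`. -/
def structM (F : Type*) [Field F] : Set (F × F × F) := {p | p.2.1 ≠ 0}

/-- The centralizer of `(m,1,0)` in `M`: points `(x,y,z) ∈ M` with `x − my = z`. -/
def Cm {F : Type*} [Field F] (m : F) : Set (F × F × F) :=
  {p | p.2.1 ≠ 0 ∧ p.1 - m * p.2.1 = p.2.2}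

/-- Maximum size of a pairwise non-commuting subset of `S` for the relation `rel`. -/
noncomputable def omegaR {F : Type*} [Field F] (S : Set (F × F × F)) : ℕ :=
  sSup {k : ℕ | ∃ N : Finset (F × F × F), ↑N ⊆ S ∧
    (∀ p ∈ N, ∀ q ∈ N, p ≠ q → ¬ rel p q) ∧ N.card = k}

theorem stmt13 {F : Type*} [Field F] [Fintype F] (hq : 2 < Fintype.card F)
    (y : F) (hy0 : y ≠ 0) (hy1 : y ≠ 1) :
    let S : Set (F × F × F) :=
      {p | ∃ z : F, p = (z, y, z)} ∪
      {p | ∃ m : F, m ≠ y⁻¹ - 1 ∧ p = (m + 1, 1, 1)} ∪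
      {(y⁻¹ - 1, 1, 0)}
    S ⊆ structM F ∧
    (∀ p ∈ S, ∀ q ∈ S, p ≠ q → ¬ rel p q) ∧
    S.ncard = 2 * Fintype.card F ∧
    2 * Fintype.card F ≤ omegaR (structM F) := by
  intro S
  have hinv : y * y⁻¹ = 1 := mul_inv_cancel₀ hy0
  -- Part 1: S ⊆ structM F
  have h1 : S ⊆ structM F := by
    rintro p ((⟨z, rfl⟩ | ⟨m, hm, rfl⟩) | rfl)
    · exact hy0
    · exact one_ne_zero
    · exact one_ne_zero
  -- Part 2: pairwise non-commuting
  have h2 : ∀ p ∈ S, ∀ q ∈ S, p ≠ q → ¬ rel p q := by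
    rintro p ((⟨z1, rfl⟩ | ⟨m1, hm1, rfl⟩) | rfl) q
        ((⟨z2, rfl⟩ | ⟨m2, hm2, rfl⟩) | rfl) hne hrel <;>
      simp only [rel] at hrel
    · -- A vs A
      apply hne
      have h : (z1 - z2) * (y - 1) = 0 := by linear_combination hrel
      rcases mul_eq_zero.mp h with h | h
      · rw [sub_eq_zero] at h; rw [h]
      · exact absurd (by linear_combination h) hy1
    · -- A vs B
      exact hm2 (by field_simp; linear_combination -hrel)
    · -- A vs c
      exact hy1 (by linear_combination hrel + hinv)
    · -- B vs A
      exact hm1 (by field_simp; linear_combination hrel)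
    · -- B vs B
      exact hne (by have : m1 = m2 := by linear_combination hrel
                    rw [this])
    · -- B vs c
      exact hm1 (by linear_combination hrel)
    · -- c vs A
      exact hy1 (by linear_combination -hrel + hinv)
    · -- c vs B
      exact hm2 (by linear_combination -hrel)
    · -- c vs c
      exact hne rfl
  -- Part 3: cardinality
  have h3 : S.ncard = 2 * Fintype.card F := by
    have hA : {p : F × F × F | ∃ z : F, p = (z, y, z)} =
        (fun z : F => (z, y, z)) '' Set.univ := by
      ext p; simp [eq_comm]
    have hB : {p : F × F × F | ∃ m : F, m ≠ y⁻¹ - 1 ∧ p = (m + 1, 1, 1)} =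
        (fun m : F => (m + 1, (1 : F), (1 : F))) '' (Set.univ \ {y⁻¹ - 1}) := by
      ext p
      constructor
      · rintro ⟨m, hm, rfl⟩; exact ⟨m, ⟨trivial, hm⟩, rfl⟩
      · rintro ⟨m, ⟨-, hm⟩, rfl⟩; exact ⟨m, hm, rfl⟩
    have hAcard : {p : F × F × F | ∃ z : F, p = (z, y, z)}.ncard = Fintype.card F := by
      rw [hA, Set.ncard_image_of_injective _ (fun a b h => by
        simpa using congrArg Prod.fst h), Set.ncard_univ, Nat.card_eq_fintype_card]
    have hBcard : {p : F × F × F | ∃ m : F, m ≠ y⁻¹ - 1 ∧ p = (m + 1, 1, 1)}.ncard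
        = Fintype.card F - 1 := by
      rw [hB, Set.ncard_image_of_injective _ (fun a b h => by
        simpa using congrArg Prod.fst h),
        Set.ncard_diff_singleton_of_mem (Set.mem_univ _), Set.ncard_univ,
        Nat.card_eq_fintype_card]
    have hdisj1 : Disjoint {p : F × F × F | ∃ z : F, p = (z, y, z)}
        {p : F × F × F | ∃ m : F, m ≠ y⁻¹ - 1 ∧ p = (m + 1, 1, 1)} := by
      rw [Set.disjoint_left]
      rintro p ⟨z, rfl⟩ ⟨m, hm, h⟩
      exact hy1 (congrArg (fun t => t.2.1) h)
    have hdisj2 : Disjoint ({p : F × F × F | ∃ z : F, p = (z, y, z)} ∪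
        {p : F × F × F | ∃ m : F, m ≠ y⁻¹ - 1 ∧ p = (m + 1, 1, 1)})
        ({(y⁻¹ - 1, 1, 0)} : Set (F × F × F)) := by
      rw [Set.disjoint_right]
      rintro p rfl
      rintro (⟨z, h⟩ | ⟨m, hm, h⟩)
      · exact hy1 (congrArg (fun t => t.2.1) h).symm
      · exact one_ne_zero (α := F) (congrArg (fun t => t.2.2) h).symm
    have e1 : S.ncard = ({p : F × F × F | ∃ z : F, p = (z, y, z)} ∪
        {p : F × F × F | ∃ m : F, m ≠ y⁻¹ - 1 ∧ p = (m + 1, 1, 1)}).ncard + 1 := by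
      rw [Set.ncard_union_eq hdisj2 (Set.toFinite _) (Set.toFinite _), Set.ncard_singleton]
    rw [e1, Set.ncard_union_eq hdisj1 (Set.toFinite _) (Set.toFinite _), hAcard, hBcard]
    omega
  refine ⟨h1, h2, h3, ?_⟩
  -- Part 4: omega bound
  apply le_csSup
  · refine ⟨Fintype.card (F × F × F), ?_⟩
    rintro k ⟨N, -, -, rfl⟩
    exact Finset.card_le_univ N
  · refine ⟨(S.toFinite).toFinset, ?_, ?_, ?_⟩
    · rw [Set.Finite.coe_toFinset]; exact h1
    · intro p hp q hq
      rw [Set.Finite.mem_toFinset] at hp hq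
      exact h2 p hp q hq
    · rw [← Set.ncard_eq_toFinset_card, h3]
end

section
/- In M = F_q × F_q* × F_q with commuting relation x₁y₂ − y₁x₂ = z₁ − z₂: for fixed a ∈ F_q*, m ∈ F_q*, c ∈ F_q, the set {(mx + c, a, amx) : x ∈ F_q} is an abelian set of size q which is non-extendable, i.e., every element of M commuting with all elements of this set already lies in the set. -/
theorem stmt14 {F : Type*} [Field F] [Fintype F]
    (a m : F) (ha : a ≠ 0) (hm : m ≠ 0) (c : F) :
    let S : Set (F × F × F) := {p | ∃ x : F, p = (m * x + c, a, a * m * x)}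
    S ⊆ structM F ∧
    (∀ p ∈ S, ∀ q ∈ S, p ≠ q → rel p q) ∧
    S.ncard = Fintype.card F ∧
    (∀ p ∈ structM F, (∀ q ∈ S, rel p q) → p ∈ S) := by
  intro S
  have hSrange : S = Set.range (fun x : F => (m * x + c, a, a * m * x)) := by
    ext p; simp [S, Set.range, eq_comm]
  refine ⟨?_, ?_, ?_, ?_⟩
  · rintro p ⟨x, rfl⟩; exact ha
  · rintro p ⟨x, rfl⟩ q ⟨y, rfl⟩ hne
    simp only [rel]; ring
  · have hinj : Function.Injective (fun x : F => (m * x + c, a, a * m * x)) := by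
      intro x y h
      have h1 : m * x + c = m * y + c := congrArg Prod.fst h
      have : m * x = m * y := by linear_combination h1
      exact mul_left_cancel₀ hm this
    rw [hSrange, ← Nat.card_coe_set_eq, Nat.card_range_of_injective hinj,
      Nat.card_eq_fintype_card]
  · rintro ⟨u, v, w⟩ hv hall
    have h0 := hall (m * 0 + c, a, a * m * 0) ⟨0, rfl⟩
    have h1 := hall (m * 1 + c, a, a * m * 1) ⟨1, rfl⟩
    simp only [rel] at h0 h1
    have hva : v = a := by
      have hvm : v * m = a * m := by linear_combination h0 - h1
      exact mul_right_cancel₀ hm hvm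
    rw [hva] at h0
    have hw : w = a * (u - c) := by linear_combination -h0
    refine ⟨(u - c) / m, ?_⟩
    have hx : m * ((u - c) / m) = u - c := by field_simp
    simp only [Prod.mk.injEq]
    refine ⟨by rw [hx]; ring, hva, by rw [mul_assoc, hx, hw]⟩
end

section
/- In M = F_q × F_q* × F_q with commuting relation x₁y₂ − y₁x₂ = z₁ − z₂, every abelian subset of M has cardinality at most q. -/
theorem stmt15 {F : Type*} [Field F] [Fintype F]
    (S : Set (F × F × F)) (hS : S ⊆ structM F)
    (habel : ∀ p ∈ S, ∀ q ∈ S, p ≠ q → rel p q) :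
    S.ncard ≤ Fintype.card F := by
  rcases Set.eq_empty_or_nonempty S with hE | ⟨p, hp⟩
  · simp [hE]
  by_cases h2 : ∃ q ∈ S, q ≠ p
  · obtain ⟨q, hq, hqp⟩ := h2
    have E : ∀ m ∈ S, ∀ r ∈ S, r.2.2 = m.2.1 * r.1 - m.1 * r.2.1 + m.2.2 := by
      intro m hm r hr
      by_cases hmr : m = r
      · subst hmr; ring
      · have h := habel m hm r hr hmr
        unfold rel at h
        linear_combination h
    have key : ∀ r ∈ S,
        (p.2.1 - q.2.1) * r.1 - (p.1 - q.1) * r.2.1 + (p.2.2 - q.2.2) = 0 := by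
      intro r hr
      have h1 := E p hp r hr
      have h2 := E q hq r hr
      linear_combination h2 - h1
    have eqpt : ∀ r ∈ S, ∀ s ∈ S, r.1 = s.1 → r.2.1 = s.2.1 → r = s := by
      intro r hr s hs h1 h21
      have h3 : r.2.2 = s.2.2 := by
        rw [E p hp r hr, E p hp s hs, h1, h21]
      exact Prod.ext h1 (Prod.ext h21 h3)
    by_cases ha : p.2.1 - q.2.1 = 0
    · by_cases hb : p.1 - q.1 = 0
      · exfalso
        have := key p hp
        rw [ha, hb] at this
        apply hqp
        have hz : p.2.2 = q.2.2 := by linear_combination this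
        have hx : q.1 = p.1 := by linear_combination -hb
        have hy : q.2.1 = p.2.1 := by linear_combination -ha
        exact Prod.ext hx (Prod.ext hy hz.symm)
      · -- use r ↦ r.1
        have hinj : Set.InjOn (fun r : F × F × F => r.1) S := by
          intro r hr s hs h
          have kr := key r hr
          have ks := key s hs
          rw [ha] at kr ks
          simp only at h
          have : r.2.1 = s.2.1 := by
            have : (p.1 - q.1) * r.2.1 = (p.1 - q.1) * s.2.1 := by linear_combination ks - kr
            exact mul_left_cancel₀ hb this
          exact eqpt r hr s hs h this
        calc S.ncard ≤ (Set.univ : Set F).ncard :=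
              Set.ncard_le_ncard_of_injOn _ (fun r _ => Set.mem_univ _) hinj Set.finite_univ
          _ = Fintype.card F := by rw [Set.ncard_univ, Nat.card_eq_fintype_card]
    · -- use r ↦ r.2.1
      have hinj : Set.InjOn (fun r : F × F × F => r.2.1) S := by
        intro r hr s hs h
        have kr := key r hr
        have ks := key s hs
        simp only at h
        have : r.1 = s.1 := by
          have : (p.2.1 - q.2.1) * r.1 = (p.2.1 - q.2.1) * s.1 := by
            rw [h] at kr; linear_combination kr - ks
          exact mul_left_cancel₀ ha this
        exact eqpt r hr s hs this h
      calc S.ncard ≤ (Set.univ : Set F).ncard :=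
            Set.ncard_le_ncard_of_injOn _ (fun r _ => Set.mem_univ _) hinj Set.finite_univ
        _ = Fintype.card F := by rw [Set.ncard_univ, Nat.card_eq_fintype_card]
  · push_neg at h2
    have : S = {p} := Set.eq_singleton_iff_unique_mem.2 ⟨hp, h2⟩
    rw [this, Set.ncard_singleton]
    exact Fintype.card_pos
end

section
/- M = F_q × F_q* × F_q with commuting relation x₁y₂ − y₁x₂ = z₁ − z₂ admits a partition into exactly q(q−1) pairwise disjoint abelian sets, each of size q, namely the sets {(x + c, a, ax) : x ∈ F_q} indexed by a ∈ F_q*, c ∈ F_q. Consequently ω(M) ≤ q(q−1). -/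
theorem stmt16 {F : Type*} [Field F] [Fintype F] [DecidableEq F] :
    let A : {a : F // a ≠ 0} × F → Set (F × F × F) :=
      fun ac => {p | ∃ x : F, p = (x + ac.2, ac.1.1, ac.1.1 * x)}
    (⋃ ac, A ac) = structM F ∧
    (∀ ac₁ ac₂, ac₁ ≠ ac₂ → A ac₁ ∩ A ac₂ = ∅) ∧
    (∀ ac, (A ac).ncard = Fintype.card F) ∧
    (∀ ac, ∀ p ∈ A ac, ∀ q ∈ A ac, p ≠ q → rel p q) ∧
    Fintype.card ({a : F // a ≠ 0} × F) = Fintype.card F * (Fintype.card F - 1) ∧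
    omegaR (structM F) ≤ Fintype.card F * (Fintype.card F - 1) := by
  intro A
  -- the indexing map
  have hmem : ∀ p : F × F × F, ∀ h : p.2.1 ≠ 0,
      p ∈ A (⟨p.2.1, h⟩, p.1 - p.2.1⁻¹ * p.2.2) := by
    intro p h
    refine ⟨p.2.1⁻¹ * p.2.2, ?_⟩
    have h3 : p.2.1 * (p.2.1⁻¹ * p.2.2) = p.2.2 := by
      field_simp
    have h1 : p.2.1⁻¹ * p.2.2 + (p.1 - p.2.1⁻¹ * p.2.2) = p.1 := by ring
    ext <;> simp [h1, h3]
  have habel : ∀ ac, ∀ p ∈ A ac, ∀ q ∈ A ac, rel p q := by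
    rintro ⟨⟨a, ha⟩, c⟩ p ⟨x, rfl⟩ q ⟨y, rfl⟩
    simp only [rel]
    ring
  have hUnion : (⋃ ac, A ac) = structM F := by
    ext p
    simp only [Set.mem_iUnion, structM, Set.mem_setOf_eq]
    constructor
    · rintro ⟨⟨⟨a, ha⟩, c⟩, x, rfl⟩
      exact ha
    · intro h
      exact ⟨_, hmem p h⟩
  refine ⟨hUnion, ?_, ?_, fun ac p hp q hq _ => habel ac p hp q hq, ?_, ?_⟩
  · rintro ⟨⟨a₁, ha₁⟩, c₁⟩ ⟨⟨a₂, ha₂⟩, c₂⟩ hne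
    ext p
    simp only [Set.mem_inter_iff, Set.mem_empty_iff_false, iff_false]
    rintro ⟨⟨x, rfl⟩, ⟨y, hy⟩⟩
    apply hne
    have h2 : a₁ = a₂ := congrArg (fun p => p.2.1) hy
    subst h2
    have h3 : a₁ * x = a₁ * y := congrArg (fun p => p.2.2) hy
    have hxy : x = y := by
      field_simp at h3; exact h3
    subst hxy
    have h1 : x + c₁ = x + c₂ := congrArg (fun p => p.1) hy
    have : c₁ = c₂ := by linear_combination h1
    subst this
    rfl
  · rintro ⟨⟨a, ha⟩, c⟩
    have : A (⟨a, ha⟩, c) = Set.range (fun x : F => (x + c, a, a * x)) := by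
      ext p; simp only [Set.mem_range, Set.mem_setOf_eq]; constructor
      · rintro ⟨x, rfl⟩; exact ⟨x, rfl⟩
      · rintro ⟨x, rfl⟩; exact ⟨x, rfl⟩
    have hinj : Function.Injective (fun x : F => (x + c, a, a * x)) := by
      intro x y hxy
      have h := congrArg (fun p => p.2.2) hxy
      simp only at h
      field_simp at h
      exact h
    rw [this, ← Nat.card_coe_set_eq, Nat.card_range_of_injective hinj,
      Nat.card_eq_fintype_card]
  · simp [Fintype.card_prod, Fintype.card_subtype_compl, mul_comm]
  · apply csSup_le'
    rintro k ⟨N, hNS, hNrel, rfl⟩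
    classical
    have key : ∀ p ∈ N, p.2.1 ≠ 0 := fun p hp => hNS hp
    set g : F × F × F → {a : F // a ≠ 0} × F := fun p =>
      if h : p.2.1 ≠ 0 then (⟨p.2.1, h⟩, p.1 - p.2.1⁻¹ * p.2.2)
      else (⟨1, one_ne_zero⟩, 0) with hg
    have hcard : N.card ≤ (Finset.univ : Finset ({a : F // a ≠ 0} × F)).card := by
      apply Finset.card_le_card_of_injOn g (fun _ _ => Finset.mem_univ _)
      intro p hp q hq hpq
      have hp0 := key p hp
      have hq0 := key q hq
      have hpA : p ∈ A (g p) := by rw [hg]; beta_reduce; rw [dif_pos hp0]; exact hmem p hp0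
      have hqA : q ∈ A (g p) := by rw [hpq, hg]; beta_reduce; rw [dif_pos hq0]; exact hmem q hq0
      by_contra hne
      exact hNrel p hp q hq hne (habel _ p hpA q hqA)
    calc N.card ≤ _ := hcard
      _ = Fintype.card ({a : F // a ≠ 0} × F) := Finset.card_univ
      _ = Fintype.card F * (Fintype.card F - 1) := by
          simp [Fintype.card_prod, Fintype.card_subtype_compl, mul_comm]
end

section
/- Let q ≠ 2 be a prime power. For the structure N = F_q × F_q* with commuting relation (x₁,y₁) C (x₂,y₂) iff x₁y₂ − y₁x₂ = x₁ − x₂, the maximum size of a pairwise non-commuting subset of N is exactly q + 1. -/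
/-- The commuting relation on `N = F × F*`: `(x₁,y₁) C (x₂,y₂)` iff
`x₁y₂ − y₁x₂ = x₁ − x₂`. -/
def relN {F : Type*} [Field F] (p q : F × F) : Prop :=
  p.1 * q.2 - p.2 * q.1 = p.1 - q.1

noncomputable def omegaN {F : Type*} [Field F] (S : Set (F × F)) : ℕ :=
  sSup {k : ℕ | ∃ N : Finset (F × F), ↑N ⊆ S ∧
    (∀ p ∈ N, ∀ q ∈ N, p ≠ q → ¬ relN p q) ∧ N.card = k}

theorem stmt19 {F : Type*} [Field F] [Fintype F] (hq : Fintype.card F ≠ 2) :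
    omegaN {p : F × F | p.2 ≠ 0} = Fintype.card F + 1 := by
  classical
  have h2 : 2 ≤ Fintype.card F := Fintype.one_lt_card
  have h3 : 3 ≤ Fintype.card F := by omega
  obtain ⟨t, ht⟩ : ∃ t : F, t ∉ ({0, -1} : Finset F) := by
    by_contra h
    push_neg at h
    have hsub : (Finset.univ : Finset F) ⊆ {0, -1} := fun x _ => h x
    have := Finset.card_le_card hsub
    have hc : ({0, -1} : Finset F).card ≤ 2 :=
      Finset.card_insert_le _ _ |>.trans (by simp)
    simp only [Finset.card_univ] at this
    omega
  simp only [Finset.mem_insert, Finset.mem_singleton, not_or] at ht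
  obtain ⟨ht0, ht1⟩ := ht
  set q := Fintype.card F with hqdef
  -- the candidate set
  set N : Finset (F × F) :=
    insert (1, 1) ((Finset.univ : Finset F).image fun c => (t * c, t + 1)) with hN
  have ht1' : t + 1 ≠ 0 := by
    intro h; apply ht1; linear_combination h
  have hmem : q + 1 ∈ {k : ℕ | ∃ N : Finset (F × F), ↑N ⊆ {p : F × F | p.2 ≠ 0} ∧
      (∀ p ∈ N, ∀ q ∈ N, p ≠ q → ¬ relN p q) ∧ N.card = k} := by
    refine ⟨N, ?_, ?_, ?_⟩
    · intro p hp
      simp only [hN, Finset.coe_insert, Set.mem_insert_iff, Finset.coe_image,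
        Set.mem_image] at hp
      rcases hp with rfl | ⟨c, _, rfl⟩
      · simp
      · simpa using ht1'
    · intro p hp r hr hne hrel
      unfold relN at hrel
      simp only [hN, Finset.mem_insert, Finset.mem_image, Finset.mem_univ,
        true_and] at hp hr
      rcases hp with rfl | ⟨c, rfl⟩ <;> rcases hr with rfl | ⟨d, rfl⟩
      · exact hne rfl
      · simp only at hrel
        apply ht0; linear_combination hrel
      · simp only at hrel
        apply ht0; linear_combination -hrel
      · have hcd : c ≠ d := by rintro rfl; exact hne rfl
        simp only at hrel
        have : t * (c - d) * t = 0 := by linear_combination hrel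
        rcases mul_eq_zero.1 this with h | h
        · rcases mul_eq_zero.1 h with h | h
          · exact ht0 h
          · exact hcd (by linear_combination h)
        · exact ht0 h
    · have hinj : Function.Injective fun c : F => (t * c, t + 1) := by
        intro a b hab
        simp only [Prod.mk.injEq] at hab
        exact mul_left_cancel₀ ht0 hab.1
      rw [hN, Finset.card_insert_of_notMem, Finset.card_image_of_injective _ hinj,
        Finset.card_univ]
      intro h
      simp only [Finset.mem_image, Finset.mem_univ, true_and, Prod.mk.injEq] at h
      obtain ⟨c, _, hc⟩ := h
      exact ht0 (by linear_combination hc)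
  have hbdd : ∀ k ∈ {k : ℕ | ∃ N : Finset (F × F), ↑N ⊆ {p : F × F | p.2 ≠ 0} ∧
      (∀ p ∈ N, ∀ q ∈ N, p ≠ q → ¬ relN p q) ∧ N.card = k}, k ≤ q + 1 := by
    rintro k ⟨M, _, hrel, rfl⟩
    have : M.card ≤ Fintype.card (Option F) := by
      apply Finset.card_le_card_of_injOn
        (fun p => if p.2 = 1 then none else some (p.1 / (p.2 - 1)))
        (fun _ _ => Finset.mem_univ _)
      intro p hp r hr hpr
      by_contra hne
      apply hrel p hp r hr hne
      unfold relN
      by_cases h1 : p.2 = 1 <;> by_cases h2 : r.2 = 1 <;>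
        simp only [h1, h2, if_pos, if_neg, if_true, if_false] at hpr
      · rw [h1, h2]; ring
      · exact absurd hpr (by simp)
      · exact absurd hpr (by simp)
      · simp only [if_neg h1, if_neg h2, Option.some.injEq] at hpr
        have hp1 : p.2 - 1 ≠ 0 := sub_ne_zero.2 h1
        have hr1 : r.2 - 1 ≠ 0 := sub_ne_zero.2 h2
        field_simp at hpr
        linear_combination hpr
    rwa [Fintype.card_option] at this
  exact le_antisymm (csSup_le ⟨q + 1, hmem⟩ hbdd) (le_csSup ⟨q + 1, hbdd⟩ hmem)
end
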